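/- arXiv:2410.00560 — 8 statements merged into one kernel-verified Lean document; each statement's English description precedes it below -/
import Mathlib

section
/- Let F be a field, V a 5-dimensional F-vector space, and μ : V × V × V → F an alternating trilinear form. Then there exist a basis e₁, ..., e₅ of V and scalars r, s ∈ F such that μ(e₁, e₂, e₃) = r, μ(e₁, e₄, e₅) = s, and μ(e_i, e_j, e_k) = 0 for every other triple i < j < k; that is, μ is equivalent under GL(V) to r·e₁* ∧ e₂* ∧ e₃* + s·e₁* ∧ e₄* ∧ e₅*. -/
set_option linter.unusedSectionVars false
set_option maxHeartbeats 1000000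

section helpers
variable {F V : Type*} [Field F] [AddCommGroup V] [Module F V]
variable (μ : V [⋀^Fin 3]→ₗ[F] F)

lemma upd0 (x a b c : V) : Function.update ![a,b,c] 0 x = ![x,b,c] := by
  ext i; fin_cases i <;> simp
lemma upd1 (x a b c : V) : Function.update ![a,b,c] 1 x = ![a,x,c] := by
  ext i; fin_cases i <;> simp
lemma upd2 (x a b c : V) : Function.update ![a,b,c] 2 x = ![a,b,x] := by
  ext i; fin_cases i <;> simp

lemma tadd0 (x y b c : V) : μ ![x+y,b,c] = μ ![x,b,c] + μ ![y,b,c] := by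
  rw [← upd0 (x+y) x b c, μ.map_update_add, upd0, upd0]
lemma tadd1 (a x y c : V) : μ ![a,x+y,c] = μ ![a,x,c] + μ ![a,y,c] := by
  rw [← upd1 (x+y) a x c, μ.map_update_add, upd1, upd1]
lemma tadd2 (a b x y : V) : μ ![a,b,x+y] = μ ![a,b,x] + μ ![a,b,y] := by
  rw [← upd2 (x+y) a b x, μ.map_update_add, upd2, upd2]

lemma tsub0 (x y b c : V) : μ ![x-y,b,c] = μ ![x,b,c] - μ ![y,b,c] := by
  rw [← upd0 (x-y) x b c, μ.map_update_sub, upd0, upd0]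
lemma tsub1 (a x y c : V) : μ ![a,x-y,c] = μ ![a,x,c] - μ ![a,y,c] := by
  rw [← upd1 (x-y) a x c, μ.map_update_sub, upd1, upd1]
lemma tsub2 (a b x y : V) : μ ![a,b,x-y] = μ ![a,b,x] - μ ![a,b,y] := by
  rw [← upd2 (x-y) a b x, μ.map_update_sub, upd2, upd2]

lemma tsmul0 (r : F) (x b c : V) : μ ![r • x,b,c] = r * μ ![x,b,c] := by
  rw [← upd0 (r • x) x b c, μ.map_update_smul, upd0, smul_eq_mul]
lemma tsmul1 (r : F) (a x c : V) : μ ![a,r • x,c] = r * μ ![a,x,c] := by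
  rw [← upd1 (r • x) a x c, μ.map_update_smul, upd1, smul_eq_mul]
lemma tsmul2 (r : F) (a b x : V) : μ ![a,b,r • x] = r * μ ![a,b,x] := by
  rw [← upd2 (r • x) a b x, μ.map_update_smul, upd2, smul_eq_mul]

lemma tzero0 (b c : V) : μ ![(0:V),b,c] = 0 := by
  rw [← upd0 0 0 b c, μ.map_update_zero]
lemma tzero1 (a c : V) : μ ![a,(0:V),c] = 0 := by
  rw [← upd1 0 a 0 c, μ.map_update_zero]
lemma tzero2 (a b : V) : μ ![a,b,(0:V)] = 0 := by
  rw [← upd2 0 a b 0, μ.map_update_zero]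

lemma teq01 (a c : V) : μ ![a,a,c] = 0 :=
  μ.map_eq_zero_of_eq _ (by simp : (![a,a,c]) 0 = (![a,a,c]) 1) (by decide)
lemma teq02 (a b : V) : μ ![a,b,a] = 0 :=
  μ.map_eq_zero_of_eq _ (by simp : (![a,b,a]) 0 = (![a,b,a]) 2) (by decide)
lemma teq12 (a b : V) : μ ![a,b,b] = 0 :=
  μ.map_eq_zero_of_eq _ (by simp : (![a,b,b]) 1 = (![a,b,b]) 2) (by decide)

lemma tswap01 (a b c : V) : μ ![b,a,c] = - μ ![a,b,c] := by
  have h := teq01 μ (a+b) c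
  rw [tadd0, tadd1, tadd1, teq01, teq01] at h
  linear_combination h
lemma tswap12 (a b c : V) : μ ![a,c,b] = - μ ![a,b,c] := by
  have h := teq12 μ a (b+c)
  rw [tadd1, tadd2, tadd2, teq12, teq12] at h
  linear_combination h
lemma tcyc1 (a b c : V) : μ ![c,a,b] = μ ![a,b,c] := by
  rw [tswap01, tswap12, neg_neg]
lemma tcyc2 (a b c : V) : μ ![b,c,a] = μ ![a,b,c] := by
  rw [← tcyc1, ← tcyc1]

lemma master [FiniteDimensional F V] (hdim : Module.finrank F V = 5)
    (v : Fin 5 → V) (hv : LinearIndependent F v)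
    (h013 : μ ![v 0, v 1, v 3] = 0) (h014 : μ ![v 0, v 1, v 4] = 0)
    (h023 : μ ![v 0, v 2, v 3] = 0) (h024 : μ ![v 0, v 2, v 4] = 0)
    (h123 : μ ![v 1, v 2, v 3] = 0) (h124 : μ ![v 1, v 2, v 4] = 0)
    (h134 : μ ![v 1, v 3, v 4] = 0) (h234 : μ ![v 2, v 3, v 4] = 0) :
    ∃ (e : Module.Basis (Fin 5) F V) (r s : F),
      μ ![e 0, e 1, e 2] = r ∧ μ ![e 0, e 3, e 4] = s ∧
      ∀ i j k : Fin 5, i < j → j < k →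
        (i, j, k) ≠ ((0 : Fin 5), (1 : Fin 5), (2 : Fin 5)) →
        (i, j, k) ≠ ((0 : Fin 5), (3 : Fin 5), (4 : Fin 5)) →
        μ ![e i, e j, e k] = 0 := by
  have hcard : Fintype.card (Fin 5) = Module.finrank F V := by simp [hdim]
  let e := basisOfLinearIndependentOfCardEqFinrank hv hcard
  have he : ∀ i, e i = v i := fun i => by
    simp [e, coe_basisOfLinearIndependentOfCardEqFinrank]
  refine ⟨e, μ ![v 0, v 1, v 2], μ ![v 0, v 3, v 4],
    by rw [he, he, he], by rw [he, he, he], ?_⟩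
  intro i j k hij hjk h1 h2
  fin_cases i <;> fin_cases j <;> fin_cases k <;> simp_all [he]

lemma inner2 [FiniteDimensional F V] (hdim : Module.finrank F V = 5)
    (u : Fin 3 → V) (w : Fin 2 → V)
    (hu : μ ![u 0, u 1, u 2] ≠ 0)
    (hw : LinearIndependent F w)
    (hker : ∀ (i j : Fin 3) (k : Fin 2), μ ![u i, u j, w k] = 0)
    (ha : μ ![u 0, w 0, w 1] ≠ 0 ∨
      (μ ![u 0, w 0, w 1] = 0 ∧ μ ![u 1, w 0, w 1] = 0 ∧ μ ![u 2, w 0, w 1] = 0)) :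
    ∃ (e : Module.Basis (Fin 5) F V) (r s : F),
      μ ![e 0, e 1, e 2] = r ∧ μ ![e 0, e 3, e 4] = s ∧
      ∀ i j k : Fin 5, i < j → j < k →
        (i, j, k) ≠ ((0 : Fin 5), (1 : Fin 5), (2 : Fin 5)) →
        (i, j, k) ≠ ((0 : Fin 5), (3 : Fin 5), (4 : Fin 5)) →
        μ ![e i, e j, e k] = 0 := by
  -- base family is linearly independent
  have hbase : LinearIndependent F ![u 0, u 1, u 2, w 0, w 1] := by
    rw [Fintype.linearIndependent_iff]
    intro g hg
    simp [Fin.sum_univ_five] at hg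
    have e0 : g 0 * μ ![u 1, u 2, u 0] = 0 := by
      have h := congrArg (fun x => μ ![u 1, u 2, x]) hg
      simpa [tadd2, tsmul2, teq02, teq12, hker, tzero0, tzero1, tzero2] using h
    have e1 : g 1 * μ ![u 2, u 0, u 1] = 0 := by
      have h := congrArg (fun x => μ ![u 2, u 0, x]) hg
      simpa [tadd2, tsmul2, teq02, teq12, hker, tzero0, tzero1, tzero2] using h
    have e2 : g 2 * μ ![u 0, u 1, u 2] = 0 := by
      have h := congrArg (fun x => μ ![u 0, u 1, x]) hg
      simpa [tadd2, tsmul2, teq02, teq12, hker, tzero0, tzero1, tzero2] using h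
    have g0 : g 0 = 0 := by
      rcases mul_eq_zero.mp e0 with h | h
      · exact h
      · rw [tcyc2] at h; exact absurd h hu
    have g1 : g 1 = 0 := by
      rcases mul_eq_zero.mp e1 with h | h
      · exact h
      · rw [tcyc1] at h; exact absurd h hu
    have g2 : g 2 = 0 := by
      rcases mul_eq_zero.mp e2 with h | h
      · exact h
      · exact absurd h hu
    rw [g0, g1, g2] at hg
    simp at hg
    have hws := Fintype.linearIndependent_iff.mp hw ![g 3, g 4]
      (by simpa [Fin.sum_univ_two] using hg)
    intro i
    fin_cases i
    · exact g0
    · exact g1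
    · exact g2
    · simpa using hws 0
    · simpa using hws 1
  rcases ha with hA | ⟨hA, hB, hC⟩
  · -- general position: modify u 1 and u 2
    set a := μ ![u 0, w 0, w 1] with hadef
    set b := μ ![u 1, w 0, w 1] with hbdef
    set c := μ ![u 2, w 0, w 1] with hcdef
    refine master μ hdim ![u 0, u 1 - (b/a) • u 0, u 2 - (c/a) • u 0, w 0, w 1] ?_ ?_ ?_ ?_ ?_ ?_ ?_ ?_ ?_
    · rw [Fintype.linearIndependent_iff]
      intro g hg
      simp only [Fin.sum_univ_five, Matrix.cons_val_zero, Matrix.cons_val_one,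
        Matrix.head_cons, Matrix.cons_val_two, Matrix.tail_cons, Matrix.cons_val_three,
        Matrix.cons_val_four] at hg
      have hg' : (g 0 - g 1 * (b/a) - g 2 * (c/a)) • u 0 + g 1 • u 1 + g 2 • u 2
          + g 3 • w 0 + g 4 • w 1 = 0 := by
        linear_combination (norm := module) hg
      have hall := Fintype.linearIndependent_iff.mp hbase
        ![g 0 - g 1 * (b/a) - g 2 * (c/a), g 1, g 2, g 3, g 4]
        (by simpa [Fin.sum_univ_five] using hg')
      have h0 := hall 0; have h1 := hall 1; have h2 := hall 2
      have h3 := hall 3; have h4 := hall 4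
      simp only [Matrix.cons_val_zero, Matrix.cons_val_one, Matrix.head_cons,
        Matrix.cons_val_two, Matrix.tail_cons, Matrix.cons_val_three,
        Matrix.cons_val_four] at h0 h1 h2 h3 h4
      intro i
      fin_cases i
      · show g 0 = 0
        linear_combination h0 + (b/a) * h1 + (c/a) * h2
      · exact h1
      · exact h2
      · exact h3
      · exact h4
    · simp [tsub1, tsmul1, hker]
    · simp [tsub1, tsmul1, hker]
    · simp [tsub1, tsmul1, hker]
    · simp [tsub1, tsmul1, hker]
    · simp [tsub0, tsub1, tsmul0, tsmul1, hker]
    · simp [tsub0, tsub1, tsmul0, tsmul1, hker]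
    · simp only [Matrix.cons_val_zero, Matrix.cons_val_one, Matrix.head_cons,
        Matrix.cons_val_two, Matrix.tail_cons, Matrix.cons_val_three, Matrix.cons_val_four]
      rw [tsub0, tsmul0, ← hbdef, ← hadef, div_mul_cancel₀ _ hA, sub_self]
    · simp only [Matrix.cons_val_zero, Matrix.cons_val_one, Matrix.head_cons,
        Matrix.cons_val_two, Matrix.tail_cons, Matrix.cons_val_three, Matrix.cons_val_four]
      rw [tsub0, tsmul0, ← hcdef, ← hadef, div_mul_cancel₀ _ hA, sub_self]
  · refine master μ hdim ![u 0, u 1, u 2, w 0, w 1] hbase ?_ ?_ ?_ ?_ ?_ ?_ ?_ ?_ <;>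
      simp [hker, hB, hC]
end helpers

/-- Let `F` be a field, `V` a 5-dimensional `F`-vector space, and `μ` an alternating
trilinear form on `V`.  Then there are a basis `e₁, …, e₅` of `V` and scalars
`r, s ∈ F` with `μ(e₁,e₂,e₃) = r`, `μ(e₁,e₄,e₅) = s`, and `μ(eᵢ,eⱼ,e_k) = 0` for every
other triple `i < j < k`; that is, `μ` is equivalent under `GL(V)` to
`r·e₁* ∧ e₂* ∧ e₃* + s·e₁* ∧ e₄* ∧ e₅*`. -/
theorem stmt4 (F V : Type*) [Field F] [AddCommGroup V] [Module F V]
    [FiniteDimensional F V] (hdim : Module.finrank F V = 5)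
    (μ : V [⋀^Fin 3]→ₗ[F] F) :
    ∃ (e : Module.Basis (Fin 5) F V) (r s : F),
      μ ![e 0, e 1, e 2] = r ∧ μ ![e 0, e 3, e 4] = s ∧
      ∀ i j k : Fin 5, i < j → j < k →
        (i, j, k) ≠ ((0 : Fin 5), (1 : Fin 5), (2 : Fin 5)) →
        (i, j, k) ≠ ((0 : Fin 5), (3 : Fin 5), (4 : Fin 5)) →
        μ ![e i, e j, e k] = 0 := by
  by_cases hμ : μ = 0
  · exact ⟨Module.finBasisOfFinrankEq F V hdim, 0, 0, by simp [hμ], by simp [hμ],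
      fun _ _ _ _ _ _ _ => by simp [hμ]⟩
  · obtain ⟨x, hx⟩ : ∃ x, μ x ≠ 0 := by
      by_contra h
      push_neg at h
      exact hμ (AlternatingMap.ext h)
    set u : Fin 3 → V := x with hudef
    have hu : μ ![u 0, u 1, u 2] ≠ 0 := by
      have hxx : ![u 0, u 1, u 2] = x := by
        funext i; fin_cases i <;> rfl
      rwa [hxx]
    let L0 : V →ₗ[F] F :=
      ⟨⟨fun y => μ ![y, u 1, u 2], fun p q => tadd0 μ p q _ _⟩,
        fun r p => by simp [tsmul0]⟩
    let L1 : V →ₗ[F] F :=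
      ⟨⟨fun y => μ ![u 0, y, u 2], fun p q => tadd1 μ _ p q _⟩,
        fun r p => by simp [tsmul1]⟩
    let L2 : V →ₗ[F] F :=
      ⟨⟨fun y => μ ![u 0, u 1, y], fun p q => tadd2 μ _ _ p q⟩,
        fun r p => by simp [tsmul2]⟩
    let φ : V →ₗ[F] (Fin 3 → F) := LinearMap.pi ![L0, L1, L2]
    have hkrank : 2 ≤ Module.finrank F (LinearMap.ker φ) := by
      have h1 := LinearMap.finrank_range_add_finrank_ker φ
      have h2 : Module.finrank F (LinearMap.range φ) ≤ Module.finrank F (Fin 3 → F) :=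
        Submodule.finrank_le _
      have h3 : Module.finrank F (Fin 3 → F) = 3 := by
        simp [Module.finrank_fintype_fun_eq_card]
      rw [hdim] at h1
      omega
    let K := LinearMap.ker φ
    let bk := Module.finBasis F K
    let emb : Fin 2 → Fin (Module.finrank F K) := fun i => ⟨i.1, lt_of_lt_of_le i.2 hkrank⟩
    let w : Fin 2 → V := fun i => (bk (emb i) : V)
    have hw : LinearIndependent F w := by
      have h1 : LinearIndependent F (fun i => bk (emb i)) :=
        bk.linearIndependent.comp emb (fun i j h => by
          simpa [emb, Fin.ext_iff] using congrArg Fin.val h)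
      exact h1.map' K.subtype (Submodule.ker_subtype K)
    have hwK : ∀ k, φ (w k) = 0 := fun k => LinearMap.mem_ker.mp (bk (emb k)).2
    have hk0 : ∀ k, μ ![w k, u 1, u 2] = 0 := fun k => by
      have := congrFun (hwK k) 0
      simpa [φ, L0] using this
    have hk1 : ∀ k, μ ![u 0, w k, u 2] = 0 := fun k => by
      have := congrFun (hwK k) 1
      simpa [φ, L1] using this
    have hk2 : ∀ k, μ ![u 0, u 1, w k] = 0 := fun k => by
      have := congrFun (hwK k) 2
      simpa [φ, L2] using this
    have h6 : ∀ (i j : Fin 3) (k : Fin 2), μ ![u i, u j, w k] = 0 := by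
      intro i j k
      fin_cases i <;> fin_cases j
      · exact teq01 μ _ _
      · exact hk2 k
      · show μ ![u 0, u 2, w k] = 0
        rw [tswap12 μ (u 0) (w k) (u 2)]
        simp [hk1 k]
      · show μ ![u 1, u 0, w k] = 0
        rw [tswap01 μ (u 0) (u 1) (w k)]
        simp [hk2 k]
      · exact teq01 μ _ _
      · show μ ![u 1, u 2, w k] = 0
        rw [tcyc2 μ (w k) (u 1) (u 2)]
        exact hk0 k
      · show μ ![u 2, u 0, w k] = 0
        rw [tcyc1 μ (u 0) (w k) (u 2)]
        exact hk1 k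
      · show μ ![u 2, u 1, w k] = 0
        rw [tswap01 μ (u 1) (u 2) (w k), tcyc2 μ (w k) (u 1) (u 2)]
        simp [hk0 k]
      · exact teq01 μ _ _
    by_cases hA : μ ![u 0, w 0, w 1] ≠ 0
    · exact inner2 μ hdim u w hu hw h6 (Or.inl hA)
    push_neg at hA
    by_cases hB : μ ![u 1, w 0, w 1] ≠ 0
    · refine inner2 μ hdim ![u 1, u 0, u 2] w ?_ hw ?_ (Or.inl ?_)
      · show μ ![u 1, u 0, u 2] ≠ 0
        rw [tswap01 μ (u 0) (u 1) (u 2)]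
        simpa using hu
      · intro i j k
        fin_cases i <;> fin_cases j <;> simp [h6]
      · show μ ![u 1, w 0, w 1] ≠ 0
        exact hB
    push_neg at hB
    by_cases hC : μ ![u 2, w 0, w 1] ≠ 0
    · refine inner2 μ hdim ![u 2, u 0, u 1] w ?_ hw ?_ (Or.inl ?_)
      · show μ ![u 2, u 0, u 1] ≠ 0
        rw [tcyc1 μ (u 0) (u 1) (u 2)]
        exact hu
      · intro i j k
        fin_cases i <;> fin_cases j <;> simp [h6]
      · show μ ![u 2, w 0, w 1] ≠ 0
        exact hC
    push_neg at hC
    exact inner2 μ hdim u w hu hw h6 (Or.inr ⟨hA, hB, hC⟩)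
end

section
/- Let A be a commutative ring in which 2 = 0 and let u, v ∈ A satisfy: u² ≠ 0, v² ≠ 0, u³ = 0, v³ = 0, u²·v = u·v², and suppose that for every nonzero element a of the additive span of {u², u·v, v²} there exists x in the additive span of {u, v} with a·x ≠ 0. Then u²·v ≠ 0 and u² ≠ v². -/
/-- Let `A` be a commutative ring in which `2 = 0` and let `u, v ∈ A` satisfy:
`u² ≠ 0`, `v² ≠ 0`, `u³ = 0`, `v³ = 0`, `u²·v = u·v²`, and suppose that for every
nonzero element `a` of the additive span of `{u², u·v, v²}` there exists `x` in the
additive span of `{u, v}` with `a·x ≠ 0`.  Then `u²·v ≠ 0` and `u² ≠ v²`. -/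
theorem stmt8 (A : Type*) [CommRing A] (h2 : (2 : A) = 0) (u v : A)
    (hu2 : u ^ 2 ≠ 0) (hv2 : v ^ 2 ≠ 0) (hu3 : u ^ 3 = 0) (hv3 : v ^ 3 = 0)
    (hPW : u ^ 2 * v = u * v ^ 2)
    (hns : ∀ a ∈ AddSubgroup.closure ({u ^ 2, u * v, v ^ 2} : Set A), a ≠ 0 →
      ∃ x ∈ AddSubgroup.closure ({u, v} : Set A), a * x ≠ 0) :
    u ^ 2 * v ≠ 0 ∧ u ^ 2 ≠ v ^ 2 := by
  have key : u ^ 2 * v ≠ 0 := by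
    intro h0
    obtain ⟨x, hx, hne⟩ := hns (u ^ 2)
      (AddSubgroup.subset_closure (by simp)) hu2
    apply hne
    clear hne
    induction hx using AddSubgroup.closure_induction with
    | mem y hy =>
      rcases hy with rfl | rfl
      · rw [← pow_succ]; exact hu3
      · exact h0
    | zero => simp
    | add a b _ _ ha hb => rw [mul_add, ha, hb, add_zero]
    | neg a _ ha => rw [mul_neg, ha, neg_zero]
  refine ⟨key, fun h => key ?_⟩
  rw [h, ← pow_succ]
  exact hv3
end

section
/- For q ≥ 1, let Γ_q be the group with presentation ⟨x, y, z ∣ [x,y] = z^q, xz = zx, yz = zy⟩. Then the centre of Γ_q is the cyclic subgroup generated by (the image of) z, and this subgroup is infinite cyclic (the image of z has infinite order). -/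
/-- The relators of the presentation `⟨x, y, z ∣ [x,y] = z^q, xz = zx, yz = zy⟩`,
as elements of the free group on three generators `x = 0`, `y = 1`, `z = 2`. -/
def nilRels (q : ℕ) : Set (FreeGroup (Fin 3)) :=
  { FreeGroup.of 0 * FreeGroup.of 1 * (FreeGroup.of 0)⁻¹ * (FreeGroup.of 1)⁻¹ *
      (FreeGroup.of 2 ^ q)⁻¹,
    FreeGroup.of 0 * FreeGroup.of 2 * (FreeGroup.of 0)⁻¹ * (FreeGroup.of 2)⁻¹,
    FreeGroup.of 1 * FreeGroup.of 2 * (FreeGroup.of 1)⁻¹ * (FreeGroup.of 2)⁻¹ }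

/-! ### A concrete model: the discrete Heisenberg group -/

@[ext]
structure Heis (q : ℕ) where
  a : ℤ
  b : ℤ
  c : ℤ

namespace Heis

variable {q : ℕ}

instance : Mul (Heis q) := ⟨fun u v => ⟨u.a + v.a, u.b + v.b, u.c + v.c + q * u.a * v.b⟩⟩
instance : One (Heis q) := ⟨⟨0, 0, 0⟩⟩
instance : Inv (Heis q) := ⟨fun u => ⟨-u.a, -u.b, q * u.a * u.b - u.c⟩⟩

@[simp] lemma mul_def (u v : Heis q) :
    u * v = ⟨u.a + v.a, u.b + v.b, u.c + v.c + q * u.a * v.b⟩ := rfl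
@[simp] lemma one_def : (1 : Heis q) = ⟨0, 0, 0⟩ := rfl
@[simp] lemma inv_def (u : Heis q) : u⁻¹ = ⟨-u.a, -u.b, q * u.a * u.b - u.c⟩ := rfl

instance : Group (Heis q) where
  mul_assoc u v w := by
    rcases u with ⟨a, b, c⟩; rcases v with ⟨a', b', c'⟩; rcases w with ⟨a'', b'', c''⟩
    simp only [mul_def, mk.injEq]
    refine ⟨by ring, by ring, by ring⟩
  one_mul u := by rcases u with ⟨a, b, c⟩; simp only [one_def, mul_def, mk.injEq]
                  exact ⟨by ring, by ring, by ring⟩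
  mul_one u := by rcases u with ⟨a, b, c⟩; simp only [one_def, mul_def, mk.injEq]
                  exact ⟨by ring, by ring, by ring⟩
  inv_mul_cancel u := by
    rcases u with ⟨a, b, c⟩
    simp only [one_def, mul_def, inv_def, mk.injEq]
    exact ⟨by ring, by ring, by ring⟩

lemma Z_pow (n : ℕ) : (⟨0, 0, 1⟩ : Heis q) ^ n = ⟨0, 0, n⟩ := by
  induction n with
  | zero => rfl
  | succ n ih =>
    rw [pow_succ, ih]
    simp only [mul_def, mk.injEq]
    refine ⟨by ring, by ring, by push_cast; ring⟩

lemma X_zpow (n : ℤ) : (⟨1, 0, 0⟩ : Heis q) ^ n = ⟨n, 0, 0⟩ := by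
  induction n using Int.induction_on with
  | zero => rfl
  | succ n ih =>
    rw [zpow_add_one, ih]; simp only [mul_def, mk.injEq]
    exact ⟨by push_cast, by ring, by ring⟩
  | pred n ih =>
    rw [zpow_sub_one, ih]; simp only [mul_def, inv_def, mk.injEq]
    exact ⟨by ring, by ring, by ring⟩

lemma Y_zpow (n : ℤ) : (⟨0, 1, 0⟩ : Heis q) ^ n = ⟨0, n, 0⟩ := by
  induction n using Int.induction_on with
  | zero => rfl
  | succ n ih =>
    rw [zpow_add_one, ih]; simp only [mul_def, mk.injEq]
    exact ⟨by ring, by push_cast, by ring⟩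
  | pred n ih =>
    rw [zpow_sub_one, ih]; simp only [mul_def, inv_def, mk.injEq]
    exact ⟨by ring, by ring, by ring⟩

lemma Z_zpow (n : ℤ) : (⟨0, 0, 1⟩ : Heis q) ^ n = ⟨0, 0, n⟩ := by
  induction n using Int.induction_on with
  | zero => rfl
  | succ n ih =>
    rw [zpow_add_one, ih]; simp only [mul_def, mk.injEq]
    exact ⟨by ring, by ring, by ring⟩
  | pred n ih =>
    rw [zpow_sub_one, ih]; simp only [mul_def, inv_def, mk.injEq]
    exact ⟨by ring, by ring, by ring⟩

end Heis

/-- The generators of the Heisenberg model. -/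
def fHeis (q : ℕ) : Fin 3 → Heis q
  | 0 => ⟨1, 0, 0⟩
  | 1 => ⟨0, 1, 0⟩
  | 2 => ⟨0, 0, 1⟩

/-! ### A general commutation lemma -/

section CommAux

variable {G : Type*} [Group G] {x y z : G}

lemma comm_aux1 (hzx : Commute z x) (h : y * x = x * y * z) :
    ∀ a : ℤ, y * x ^ a = x ^ a * y * z ^ a := by
  have hinv : y * x⁻¹ = x⁻¹ * y * z⁻¹ := by
    have e1 : x⁻¹ * y = y * x⁻¹ * z := by
      calc x⁻¹ * y = x⁻¹ * (y * x) * x⁻¹ := by group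
        _ = x⁻¹ * (x * y * z) * x⁻¹ := by rw [h]
        _ = y * (z * x⁻¹) := by group
        _ = y * (x⁻¹ * z) := by rw [hzx.inv_right.eq]
        _ = y * x⁻¹ * z := by group
    rw [e1]; group
  intro a
  induction a using Int.induction_on with
  | zero => simp
  | succ n ih =>
    calc y * x ^ ((n : ℤ) + 1) = (y * x ^ (n : ℤ)) * x := by group
      _ = x ^ (n : ℤ) * y * z ^ (n : ℤ) * x := by rw [ih]
      _ = (x ^ (n : ℤ) * y) * (x * z ^ (n : ℤ)) := by
            rw [mul_assoc (x ^ (n : ℤ) * y), (hzx.zpow_left (n : ℤ)).eq]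
      _ = x ^ (n : ℤ) * (y * x) * z ^ (n : ℤ) := by group
      _ = x ^ (n : ℤ) * (x * y * z) * z ^ (n : ℤ) := by rw [h]
      _ = x ^ ((n : ℤ) + 1) * y * z ^ ((n : ℤ) + 1) := by group
  | pred n ih =>
    calc y * x ^ (-(n : ℤ) - 1) = (y * x ^ (-(n : ℤ))) * x⁻¹ := by group
      _ = x ^ (-(n : ℤ)) * y * z ^ (-(n : ℤ)) * x⁻¹ := by rw [ih]
      _ = (x ^ (-(n : ℤ)) * y) * (x⁻¹ * z ^ (-(n : ℤ))) := by
            rw [mul_assoc (x ^ (-(n : ℤ)) * y), ((hzx.zpow_left (-(n : ℤ))).inv_right).eq]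
      _ = x ^ (-(n : ℤ)) * (y * x⁻¹) * z ^ (-(n : ℤ)) := by group
      _ = x ^ (-(n : ℤ)) * (x⁻¹ * y * z⁻¹) * z ^ (-(n : ℤ)) := by rw [hinv]
      _ = x ^ (-(n : ℤ) - 1) * y * z ^ (-(n : ℤ) - 1) := by group

lemma comm_aux2 (hzx : Commute z x) (hzy : Commute z y) (h : y * x = x * y * z) :
    ∀ a b : ℤ, y ^ b * x ^ a = x ^ a * y ^ b * z ^ (a * b) := by
  intro a b
  have h1 := comm_aux1 hzx h
  have e2 : y⁻¹ * x ^ a = x ^ a * y⁻¹ * z ^ (-a) := by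
    have key : y * (x ^ a * y⁻¹ * z ^ (-a)) = x ^ a := by
      calc y * (x ^ a * y⁻¹ * z ^ (-a)) = (y * x ^ a) * (y⁻¹ * z ^ (-a)) := by group
        _ = (x ^ a * y * z ^ a) * (y⁻¹ * z ^ (-a)) := by rw [h1]
        _ = x ^ a * y * (z ^ a * y⁻¹) * z ^ (-a) := by group
        _ = x ^ a * y * (y⁻¹ * z ^ a) * z ^ (-a) := by rw [((hzy.zpow_left a).inv_right).eq]
        _ = x ^ a := by group
    refine mul_left_cancel (a := y) ?_
    rw [key]; group
  induction b using Int.induction_on with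
  | zero => simp
  | succ n ih =>
    calc y ^ ((n : ℤ) + 1) * x ^ a = y ^ (n : ℤ) * (y * x ^ a) := by group
      _ = y ^ (n : ℤ) * (x ^ a * y * z ^ a) := by rw [h1]
      _ = (y ^ (n : ℤ) * x ^ a) * y * z ^ a := by group
      _ = (x ^ a * y ^ (n : ℤ) * z ^ (a * (n : ℤ))) * y * z ^ a := by rw [ih]
      _ = x ^ a * y ^ (n : ℤ) * (z ^ (a * (n : ℤ)) * y) * z ^ a := by group
      _ = x ^ a * y ^ (n : ℤ) * (y * z ^ (a * (n : ℤ))) * z ^ a := by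
            rw [(hzy.zpow_left (a * (n : ℤ))).eq]
      _ = x ^ a * y ^ ((n : ℤ) + 1) * z ^ (a * ((n : ℤ) + 1)) := by
            rw [show a * ((n : ℤ) + 1) = a * (n : ℤ) + a by ring]; group
  | pred n ih =>
    calc y ^ (-(n : ℤ) - 1) * x ^ a = y ^ (-(n : ℤ)) * (y⁻¹ * x ^ a) := by group
      _ = y ^ (-(n : ℤ)) * (x ^ a * y⁻¹ * z ^ (-a)) := by rw [e2]
      _ = (y ^ (-(n : ℤ)) * x ^ a) * y⁻¹ * z ^ (-a) := by group
      _ = (x ^ a * y ^ (-(n : ℤ)) * z ^ (a * (-(n : ℤ)))) * y⁻¹ * z ^ (-a) := by rw [ih]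
      _ = x ^ a * y ^ (-(n : ℤ)) * (z ^ (a * (-(n : ℤ))) * y⁻¹) * z ^ (-a) := by group
      _ = x ^ a * y ^ (-(n : ℤ)) * (y⁻¹ * z ^ (a * (-(n : ℤ)))) * z ^ (-a) := by
            rw [((hzy.zpow_left (a * (-(n : ℤ)))).inv_right).eq]
      _ = x ^ a * y ^ (-(n : ℤ) - 1) * z ^ (a * (-(n : ℤ) - 1)) := by
            rw [show a * (-(n : ℤ) - 1) = a * (-(n : ℤ)) + -a by ring]; group

end CommAux

/-- For `q ≥ 1` and `Γ_q = ⟨x, y, z ∣ [x,y] = z^q, xz = zx, yz = zy⟩`, the centre of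
`Γ_q` is the cyclic subgroup generated by the image of `z`, and this subgroup is
infinite cyclic (the image of `z` has infinite order). -/
theorem stmt11 (q : ℕ) (hq : 1 ≤ q) :
    Subgroup.center (PresentedGroup (nilRels q)) =
      Subgroup.zpowers (PresentedGroup.of (rels := nilRels q) 2) ∧
    ¬ IsOfFinOrder (PresentedGroup.of (rels := nilRels q) 2) := by
  set Γ := PresentedGroup (nilRels q)
  set X : Γ := PresentedGroup.of (rels := nilRels q) 0 with hXdef
  set Y : Γ := PresentedGroup.of (rels := nilRels q) 1 with hYdef
  set Z : Γ := PresentedGroup.of (rels := nilRels q) 2 with hZdef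
  -- the relations hold in Γ
  have hmk : ∀ r ∈ nilRels q, PresentedGroup.mk (nilRels q) r = 1 := fun r hr =>
    (QuotientGroup.eq_one_iff _).mpr (Subgroup.subset_normalClosure hr)
  have hof : ∀ i : Fin 3, PresentedGroup.mk (nilRels q) (FreeGroup.of i) =
      PresentedGroup.of i := fun _ => rfl
  have h1 : X * Y * X⁻¹ * Y⁻¹ * (Z ^ q)⁻¹ = 1 := by
    have := hmk _ (Set.mem_insert _ (_ : Set (FreeGroup (Fin 3))))
    simpa only [map_mul, map_inv, map_pow, hof] using this
  have h2 : X * Z * X⁻¹ * Z⁻¹ = 1 := by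
    have := hmk _ (Set.mem_insert_of_mem _ (Set.mem_insert _
      ({FreeGroup.of 1 * FreeGroup.of 2 * (FreeGroup.of 1)⁻¹ * (FreeGroup.of 2)⁻¹} :
        Set (FreeGroup (Fin 3)))))
    simpa only [map_mul, map_inv, hof] using this
  have h3 : Y * Z * Y⁻¹ * Z⁻¹ = 1 := by
    have := hmk _ (Set.mem_insert_of_mem _ (Set.mem_insert_of_mem _ rfl))
    simpa only [map_mul, map_inv, hof] using this
  -- commutation facts
  have hXZ : Commute X Z := by
    have h2' : (X * Z) * (Z * X)⁻¹ = 1 := by rw [mul_inv_rev, ← mul_assoc]; exact h2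
    exact mul_inv_eq_one.mp h2'
  have hYZ : Commute Y Z := by
    have h3' : (Y * Z) * (Z * Y)⁻¹ = 1 := by rw [mul_inv_rev, ← mul_assoc]; exact h3
    exact mul_inv_eq_one.mp h3'
  have hZX : Commute Z X := hXZ.symm
  have hZY : Commute Z Y := hYZ.symm
  have cZX : ∀ m n : ℤ, Commute (Z ^ m) (X ^ n) := fun m n => (hZX.zpow_left m).zpow_right n
  have cZY : ∀ m n : ℤ, Commute (Z ^ m) (Y ^ n) := fun m n => (hZY.zpow_left m).zpow_right n
  have hc : (Z ^ q)⁻¹ = Z ^ (-(q : ℤ)) := by group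
  have hyx : Y * X = X * Y * Z ^ (-(q : ℤ)) := by
    have h1' : X * Y * X⁻¹ * Y⁻¹ = Z ^ q := mul_inv_eq_one.mp h1
    have h1'' : X * Y = Z ^ q * (Y * X) := by
      calc X * Y = (X * Y * X⁻¹ * Y⁻¹) * (Y * X) := by group
        _ = Z ^ q * (Y * X) := by rw [h1']
    have hZqX : Commute ((Z ^ q)⁻¹) X := ((hZX.pow_left q).inv_left)
    have hZqY : Commute ((Z ^ q)⁻¹) Y := ((hZY.pow_left q).inv_left)
    calc Y * X = (Z ^ q)⁻¹ * (X * Y) := by rw [h1'']; group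
      _ = ((Z ^ q)⁻¹ * X) * Y := by group
      _ = (X * (Z ^ q)⁻¹) * Y := by rw [hZqX.eq]
      _ = X * ((Z ^ q)⁻¹ * Y) := by group
      _ = X * (Y * (Z ^ q)⁻¹) := by rw [hZqY.eq]
      _ = X * Y * Z ^ (-(q : ℤ)) := by rw [hc]; group
  have hZqX' : Commute (Z ^ (-(q : ℤ))) X := hZX.zpow_left _
  have hZqY' : Commute (Z ^ (-(q : ℤ))) Y := hZY.zpow_left _
  have hYX : ∀ a b : ℤ, Y ^ b * X ^ a = X ^ a * Y ^ b * Z ^ (-(q : ℤ) * (a * b)) := by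
    intro a b
    have := comm_aux2 hZqX' hZqY' hyx a b
    rw [this, ← zpow_mul]
  -- every element has normal form X^A Y^B Z^C
  have normal_form : ∀ g : Γ, ∃ A B C : ℤ, g = X ^ A * Y ^ B * Z ^ C := by
    set S : Subgroup Γ :=
      { carrier := { g | ∃ A B C : ℤ, g = X ^ A * Y ^ B * Z ^ C }
        one_mem' := ⟨0, 0, 0, by group⟩
        mul_mem' := by
          rintro u v ⟨A, B, C, rfl⟩ ⟨A', B', C', rfl⟩
          refine ⟨A + A', B + B', -(q : ℤ) * (A' * B) + (C + C'), ?_⟩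
          calc (X ^ A * Y ^ B * Z ^ C) * (X ^ A' * Y ^ B' * Z ^ C')
              = X ^ A * Y ^ B * (Z ^ C * X ^ A') * (Y ^ B' * Z ^ C') := by group
            _ = X ^ A * Y ^ B * (X ^ A' * Z ^ C) * (Y ^ B' * Z ^ C') := by rw [(cZX C A').eq]
            _ = X ^ A * (Y ^ B * X ^ A') * (Z ^ C * Y ^ B') * Z ^ C' := by group
            _ = X ^ A * (X ^ A' * Y ^ B * Z ^ (-(q : ℤ) * (A' * B))) * (Y ^ B' * Z ^ C) * Z ^ C' := by
                rw [hYX A' B, (cZY C B').eq]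
            _ = X ^ A * X ^ A' * Y ^ B * (Z ^ (-(q : ℤ) * (A' * B)) * Y ^ B') * (Z ^ C * Z ^ C') := by
                group
            _ = X ^ A * X ^ A' * Y ^ B * (Y ^ B' * Z ^ (-(q : ℤ) * (A' * B))) * (Z ^ C * Z ^ C') := by
                rw [(cZY _ B').eq]
            _ = X ^ (A + A') * Y ^ (B + B') * Z ^ (-(q : ℤ) * (A' * B) + (C + C')) := by group
        inv_mem' := by
          rintro u ⟨A, B, C, rfl⟩
          refine ⟨-A, -B, -(q : ℤ) * (-A * -B) + -C, ?_⟩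
          calc (X ^ A * Y ^ B * Z ^ C)⁻¹ = (Z ^ (-C) * Y ^ (-B)) * X ^ (-A) := by group
            _ = (Y ^ (-B) * Z ^ (-C)) * X ^ (-A) := by rw [(cZY (-C) (-B)).eq]
            _ = Y ^ (-B) * (Z ^ (-C) * X ^ (-A)) := by group
            _ = Y ^ (-B) * (X ^ (-A) * Z ^ (-C)) := by rw [(cZX (-C) (-A)).eq]
            _ = (Y ^ (-B) * X ^ (-A)) * Z ^ (-C) := by group
            _ = (X ^ (-A) * Y ^ (-B) * Z ^ (-(q : ℤ) * (-A * -B))) * Z ^ (-C) := by rw [hYX]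
            _ = X ^ (-A) * Y ^ (-B) * Z ^ (-(q : ℤ) * (-A * -B) + -C) := by group }
    intro g
    refine PresentedGroup.generated_by (nilRels q) S ?_ g
    intro j
    fin_cases j
    · exact ⟨1, 0, 0, by show X = _; group⟩
    · exact ⟨0, 1, 0, by show Y = _; group⟩
    · exact ⟨0, 0, 1, by show Z = _; group⟩
  -- the homomorphism to the Heisenberg model
  have hrels : ∀ r ∈ nilRels q, FreeGroup.lift (fHeis q) r = 1 := by
    intro r hr
    have hZq : (⟨0, 0, 1⟩ : Heis q) ^ q = ⟨0, 0, q⟩ := Heis.Z_pow q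
    rcases hr with rfl | rfl | rfl
    · simp only [map_mul, map_inv, map_pow, FreeGroup.lift_apply_of, fHeis, hZq,
        Heis.mul_def, Heis.inv_def, Heis.one_def, Heis.mk.injEq]
      refine ⟨by ring, by ring, by ring⟩
    · simp only [map_mul, map_inv, FreeGroup.lift_apply_of, fHeis,
        Heis.mul_def, Heis.inv_def, Heis.one_def, Heis.mk.injEq]
      refine ⟨by ring, by ring, by ring⟩
    · simp only [map_mul, map_inv, FreeGroup.lift_apply_of, fHeis,
        Heis.mul_def, Heis.inv_def, Heis.one_def, Heis.mk.injEq]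
      refine ⟨by ring, by ring, by ring⟩
  set φ : Γ →* Heis q := PresentedGroup.toGroup hrels with hφdef
  have hφX : φ X = ⟨1, 0, 0⟩ := PresentedGroup.toGroup.of hrels
  have hφY : φ Y = ⟨0, 1, 0⟩ := PresentedGroup.toGroup.of hrels
  have hφZ : φ Z = ⟨0, 0, 1⟩ := PresentedGroup.toGroup.of hrels
  have hqZ : (q : ℤ) ≠ 0 := by omega
  constructor
  · apply le_antisymm
    · -- center ≤ zpowers Z
      intro g hg
      obtain ⟨A, B, C, rfl⟩ := normal_form g
      have hgX : φ (X ^ A * Y ^ B * Z ^ C) * φ X = φ X * φ (X ^ A * Y ^ B * Z ^ C) := by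
        rw [← map_mul, ← map_mul, Subgroup.mem_center_iff.mp hg X]
      have hgY : φ (X ^ A * Y ^ B * Z ^ C) * φ Y = φ Y * φ (X ^ A * Y ^ B * Z ^ C) := by
        rw [← map_mul, ← map_mul, Subgroup.mem_center_iff.mp hg Y]
      have hφg : φ (X ^ A * Y ^ B * Z ^ C) = ⟨A, B, C + q * A * B⟩ := by
        rw [map_mul, map_mul, map_zpow, map_zpow, map_zpow, hφX, hφY, hφZ,
          Heis.X_zpow, Heis.Y_zpow, Heis.Z_zpow]
        simp only [Heis.mul_def, Heis.mk.injEq]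
        refine ⟨by ring, by ring, by ring⟩
      rw [hφg, hφX] at hgX
      rw [hφg, hφY] at hgY
      simp only [Heis.mul_def, Heis.mk.injEq] at hgX hgY
      have hB : B = 0 := by
        have := hgX.2.2
        have h0 : (q : ℤ) * B = 0 := by linarith
        exact (mul_eq_zero.mp h0).resolve_left hqZ
      have hA : A = 0 := by
        have := hgY.2.2
        have h0 : (q : ℤ) * A = 0 := by linarith
        exact (mul_eq_zero.mp h0).resolve_left hqZ
      exact ⟨C, by rw [hA, hB]; group⟩
    · -- zpowers Z ≤ center
      have hZcent : Z ∈ Subgroup.center Γ := by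
        rw [Subgroup.mem_center_iff]
        intro g
        have : g ∈ Subgroup.centralizer ({Z} : Set Γ) := by
          refine PresentedGroup.generated_by (nilRels q) _ ?_ g
          intro j
          rw [Subgroup.mem_centralizer_iff]
          intro h hh
          rw [Set.mem_singleton_iff] at hh
          subst hh
          fin_cases j
          · exact hZX.eq
          · exact hZY.eq
          · rfl
        have := Subgroup.mem_centralizer_iff.mp this Z rfl
        exact this.symm
      exact Subgroup.zpowers_le.mpr hZcent
  · -- Z has infinite order
    intro hfin
    obtain ⟨n, hn, hpow⟩ := (isOfFinOrder_iff_pow_eq_one).mp (φ.isOfFinOrder hfin)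
    rw [hφZ, Heis.Z_pow] at hpow
    have : ((n : ℤ)) = 0 := by
      have := congrArg Heis.c hpow
      simpa using this
    omega
end

section
/- For q ≥ 1, let Γ_q be the group with presentation ⟨x, y, z ∣ [x,y] = z^q, xz = zx, yz = zy⟩. Then the commutator subgroup Γ_q′ is the cyclic subgroup generated by (the image of) z^q. -/
open scoped commutatorElement

section aux
variable (q : ℕ)

lemma nil_mk_eq_one {r : FreeGroup (Fin 3)} (hr : r ∈ nilRels q) :
    PresentedGroup.mk (nilRels q) r = 1 :=
  (QuotientGroup.eq_one_iff r).2 (Subgroup.subset_normalClosure hr)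

lemma nil_xy : ⁅(PresentedGroup.of (rels := nilRels q) 0), PresentedGroup.of 1⁆ =
    (PresentedGroup.of (rels := nilRels q) 2) ^ q := by
  have h := nil_mk_eq_one q (r := FreeGroup.of 0 * FreeGroup.of 1 * (FreeGroup.of 0)⁻¹ *
    (FreeGroup.of 1)⁻¹ * (FreeGroup.of 2 ^ q)⁻¹) (by left; rfl)
  simp only [map_mul, map_inv, map_pow] at h
  rw [mul_inv_eq_one] at h
  exact h

lemma nil_xz : Commute (PresentedGroup.of (rels := nilRels q) 0) (PresentedGroup.of 2) := by
  have h := nil_mk_eq_one q (r := FreeGroup.of 0 * FreeGroup.of 2 * (FreeGroup.of 0)⁻¹ *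
    (FreeGroup.of 2)⁻¹) (by right; left; rfl)
  simp only [map_mul, map_inv] at h
  exact commutatorElement_eq_one_iff_commute.mp h

lemma nil_yz : Commute (PresentedGroup.of (rels := nilRels q) 1) (PresentedGroup.of 2) := by
  have h := nil_mk_eq_one q (r := FreeGroup.of 1 * FreeGroup.of 2 * (FreeGroup.of 1)⁻¹ *
    (FreeGroup.of 2)⁻¹) (by right; right; rfl)
  simp only [map_mul, map_inv] at h
  exact commutatorElement_eq_one_iff_commute.mp h

lemma nil_z_central (g : PresentedGroup (nilRels q)) :
    Commute g (PresentedGroup.of 2) := by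
  have hm := PresentedGroup.generated_by (nilRels q)
    (Subgroup.centralizer {PresentedGroup.of 2}) (fun j => ?_) g
  · exact (Subgroup.mem_centralizer_iff.mp hm _ rfl).symm
  · rw [Subgroup.mem_centralizer_iff]
    intro h hh
    rcases hh with rfl
    fin_cases j
    · exact (nil_xz q).symm.eq
    · exact (nil_yz q).symm.eq
    · rfl

end aux

/-- For `q ≥ 1` and `Γ_q = ⟨x, y, z ∣ [x,y] = z^q, xz = zx, yz = zy⟩`, the commutator
subgroup `Γ_q′` is the cyclic subgroup generated by the image of `z^q`. -/
theorem stmt12 (q : ℕ) (hq : 1 ≤ q) :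
    commutator (PresentedGroup (nilRels q)) =
      Subgroup.zpowers ((PresentedGroup.of (rels := nilRels q) 2) ^ q) := by
  set Z := PresentedGroup.of (rels := nilRels q) 2 with hZ
  have hcent : ∀ g : PresentedGroup (nilRels q), Commute g (Z ^ q) :=
    fun g => (nil_z_central q g).pow_right q
  have hN : (Subgroup.zpowers (Z ^ q)).Normal := by
    constructor
    intro n hn g
    rcases Subgroup.mem_zpowers_iff.mp hn with ⟨k, rfl⟩
    have hc : Commute g ((Z ^ q) ^ k) := ((hcent g).zpow_right k)
    rw [hc.eq, mul_assoc, mul_inv_cancel, mul_one]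
    exact Subgroup.zpow_mem _ (Subgroup.mem_zpowers _) k
  apply le_antisymm
  · rw [commutator_def, Subgroup.commutator_le]
    intro g₁ _ g₂ _
    rw [← QuotientGroup.ker_mk' (Subgroup.zpowers (Z ^ q)), MonoidHom.mem_ker,
      map_commutatorElement]
    refine commutatorElement_eq_one_iff_commute.mpr ?_
    set π := QuotientGroup.mk' (Subgroup.zpowers (Z ^ q)) with hπ
    have key : ∀ j : Fin 3, ∀ b : PresentedGroup (nilRels q),
        Commute (π (PresentedGroup.of j)) (π b) := by
      intro j b
      have hm := PresentedGroup.generated_by (nilRels q)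
        ((Subgroup.centralizer {π (PresentedGroup.of j)}).comap π) (fun i => ?_) b
      · exact Subgroup.mem_centralizer_iff.mp (Subgroup.mem_comap.mp hm) _ rfl
      · simp only [Subgroup.mem_comap, Subgroup.mem_centralizer_iff]
        intro h hh
        rcases hh with rfl
        have hxy' : π ⁅(PresentedGroup.of (rels := nilRels q) 0), PresentedGroup.of 1⁆ = 1 := by
          rw [nil_xy q]
          exact (QuotientGroup.eq_one_iff _).2 (Subgroup.mem_zpowers _)
        rw [map_commutatorElement] at hxy'
        have hxy'' := commutatorElement_eq_one_iff_commute.mp hxy'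
        fin_cases i <;> fin_cases j
        · rfl
        · exact hxy''.symm.eq
        · exact congrArg π (nil_xz q).symm.eq
        · exact hxy''.eq
        · rfl
        · exact congrArg π (nil_yz q).symm.eq
        · exact congrArg π (nil_xz q).eq
        · exact congrArg π (nil_yz q).eq
        · rfl
    have hcomm : ∀ a b : PresentedGroup (nilRels q), Commute (π a) (π b) := by
      intro a b
      have hm := PresentedGroup.generated_by (nilRels q)
        ((Subgroup.centralizer {π b}).comap π) (fun i => ?_) a
      · exact (Subgroup.mem_centralizer_iff.mp (Subgroup.mem_comap.mp hm) _ rfl).symm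
      · simp only [Subgroup.mem_comap, Subgroup.mem_centralizer_iff]
        intro h hh
        rcases hh with rfl
        exact (key i b).symm.eq
    exact hcomm g₁ g₂
  · rw [Subgroup.zpowers_le, ← nil_xy q]
    exact Subgroup.commutator_mem_commutator (Subgroup.mem_top _) (Subgroup.mem_top _)
end

section
/- For q ≥ 1, let Γ_q be the group with presentation ⟨x, y, z ∣ [x,y] = z^q, xz = zx, yz = zy⟩, and let I(Γ_q) denote the preimage in Γ_q of the torsion subgroup of the abelianization Γ_q^{ab}. Then I(Γ_q) equals the centre of Γ_q, which is the cyclic subgroup generated by (the image of) z. -/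
/-- `I(G)`: the preimage in `G` of the torsion subgroup of the abelianization `G^{ab}`. -/
def IGrp (G : Type*) [Group G] : Subgroup G :=
  Subgroup.comap Abelianization.of (CommGroup.torsion (Abelianization G))

/-- Concrete Heisenberg-type model: `ℤ³` with a twisted multiplication. -/
structure Heis_s13 (q : ℕ) where
  a : ℤ
  b : ℤ
  c : ℤ

namespace Heis_s13

variable {q : ℕ}

theorem ext' {g h : Heis_s13 q} (ha : g.a = h.a) (hb : g.b = h.b) (hc : g.c = h.c) : g = h := by
  cases g; cases h; simp_all

instance inst_s13 : Mul (Heis_s13 q) :=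
  ⟨fun g h => ⟨g.a + h.a, g.b + h.b, g.c + h.c - q * h.a * g.b⟩⟩

instance inst_s13_2 : One (Heis_s13 q) := ⟨⟨0, 0, 0⟩⟩

instance inst_s13_3 : Inv (Heis_s13 q) :=
  ⟨fun g => ⟨-g.a, -g.b, -g.c - q * g.a * g.b⟩⟩

@[simp] theorem mul_a (g h : Heis_s13 q) : (g * h).a = g.a + h.a := rfl
@[simp] theorem mul_b (g h : Heis_s13 q) : (g * h).b = g.b + h.b := rfl
@[simp] theorem mul_c (g h : Heis_s13 q) : (g * h).c = g.c + h.c - q * h.a * g.b := rfl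
@[simp] theorem one_a : (1 : Heis_s13 q).a = 0 := rfl
@[simp] theorem one_b : (1 : Heis_s13 q).b = 0 := rfl
@[simp] theorem one_c : (1 : Heis_s13 q).c = 0 := rfl
@[simp] theorem inv_a (g : Heis_s13 q) : (g⁻¹).a = -g.a := rfl
@[simp] theorem inv_b (g : Heis_s13 q) : (g⁻¹).b = -g.b := rfl
@[simp] theorem inv_c (g : Heis_s13 q) : (g⁻¹).c = -g.c - q * g.a * g.b := rfl

instance inst_s13_4 : Group (Heis_s13 q) where
  mul_assoc g h k := ext' (by simp [add_assoc]) (by simp [add_assoc]) (by simp; ring)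
  one_mul g := ext' (by simp) (by simp) (by simp)
  mul_one g := ext' (by simp) (by simp) (by simp)
  inv_mul_cancel g := ext' (by simp) (by simp) (by simp; ring)

@[simp] theorem zpow_c (n : ℤ) : (⟨0, 0, 1⟩ : Heis_s13 q) ^ n = ⟨0, 0, n⟩ := by
  have hn : ∀ m : ℕ, (⟨0, 0, 1⟩ : Heis_s13 q) ^ m = ⟨0, 0, (m : ℤ)⟩ := by
    intro m
    induction m with
    | zero => rfl
    | succ k ih =>
      rw [pow_succ, ih]
      exact ext' (by simp) (by simp) (by push_cast; simp)
  cases n with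
  | ofNat m => simpa using hn m
  | negSucc m =>
    rw [zpow_negSucc, hn]
    exact ext' (by simp) (by simp) (by simp [Int.negSucc_eq])

theorem pow_nat_c (m : ℕ) : (⟨0, 0, 1⟩ : Heis_s13 q) ^ m = ⟨0, 0, (m : ℤ)⟩ := by
  have := zpow_c (q := q) (m : ℤ)
  rwa [zpow_natCast] at this

/-- The map of generators into the model. -/
def gen : Fin 3 → Heis_s13 q := ![⟨1, 0, 0⟩, ⟨0, 1, 0⟩, ⟨0, 0, 1⟩]

theorem lift_rels (r : FreeGroup (Fin 3)) (hr : r ∈ nilRels q) :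
    FreeGroup.lift (gen (q := q)) r = 1 := by
  have h0 : FreeGroup.lift (gen (q := q)) (FreeGroup.of 0) = ⟨1, 0, 0⟩ := FreeGroup.lift_apply_of
  have h1 : FreeGroup.lift (gen (q := q)) (FreeGroup.of 1) = ⟨0, 1, 0⟩ := FreeGroup.lift_apply_of
  have h2 : FreeGroup.lift (gen (q := q)) (FreeGroup.of 2) = ⟨0, 0, 1⟩ := FreeGroup.lift_apply_of
  rcases hr with hr | hr | hr <;> subst hr <;>
    simp only [map_mul, map_inv, map_pow, h0, h1, h2, pow_nat_c] <;>
    exact ext' (by simp) (by simp) (by simp)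

/-- First coordinate as a homomorphism. -/
def pa : Heis_s13 q →* Multiplicative ℤ :=
  MonoidHom.mk' (fun g => Multiplicative.ofAdd g.a) (fun g h => by
    simp [← ofAdd_add])

/-- Second coordinate as a homomorphism. -/
def pb : Heis_s13 q →* Multiplicative ℤ :=
  MonoidHom.mk' (fun g => Multiplicative.ofAdd g.b) (fun g h => by
    simp [← ofAdd_add])

end Heis_s13

section Main

variable (q : ℕ)

local notation "Γ" => PresentedGroup (nilRels q)

/-- The canonical map to the Heisenberg model. -/
noncomputable def psi : PresentedGroup (nilRels q) →* Heis_s13 q :=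
  PresentedGroup.toGroup (Heis_s13.lift_rels (q := q))

theorem psi_of (i : Fin 3) : psi q (PresentedGroup.of i) = Heis_s13.gen i :=
  PresentedGroup.toGroup.of _

theorem rel_eq_one (r : FreeGroup (Fin 3)) (hr : r ∈ nilRels q) :
    PresentedGroup.mk (nilRels q) r = 1 :=
  (QuotientGroup.eq_one_iff r).2 (Subgroup.subset_normalClosure hr)

theorem commute_xz :
    Commute (PresentedGroup.of (rels := nilRels q) 0) (PresentedGroup.of (rels := nilRels q) 2) := by
  have h := rel_eq_one q _ (by simp [nilRels] :
    (FreeGroup.of 0 * FreeGroup.of 2 * (FreeGroup.of 0)⁻¹ * (FreeGroup.of 2)⁻¹ : FreeGroup (Fin 3))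
      ∈ nilRels q)
  simp only [map_mul, map_inv] at h
  exact commutatorElement_eq_one_iff_commute.mp h

theorem commute_yz :
    Commute (PresentedGroup.of (rels := nilRels q) 1) (PresentedGroup.of (rels := nilRels q) 2) := by
  have h := rel_eq_one q _ (by simp [nilRels] :
    (FreeGroup.of 1 * FreeGroup.of 2 * (FreeGroup.of 1)⁻¹ * (FreeGroup.of 2)⁻¹ : FreeGroup (Fin 3))
      ∈ nilRels q)
  simp only [map_mul, map_inv] at h
  exact commutatorElement_eq_one_iff_commute.mp h

theorem z_pow_q :
    PresentedGroup.of (rels := nilRels q) 0 * PresentedGroup.of 1 *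
      (PresentedGroup.of (rels := nilRels q) 0)⁻¹ * (PresentedGroup.of (rels := nilRels q) 1)⁻¹ =
      PresentedGroup.of (rels := nilRels q) 2 ^ q := by
  have h := rel_eq_one q _ (by simp [nilRels] :
    (FreeGroup.of 0 * FreeGroup.of 1 * (FreeGroup.of 0)⁻¹ * (FreeGroup.of 1)⁻¹ *
      (FreeGroup.of 2 ^ q)⁻¹ : FreeGroup (Fin 3)) ∈ nilRels q)
  simp only [map_mul, map_inv, map_pow] at h
  exact mul_inv_eq_one.mp h

theorem z_mem_center : PresentedGroup.of (rels := nilRels q) 2 ∈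
    Subgroup.center (PresentedGroup (nilRels q)) := by
  rw [Subgroup.mem_center_iff]
  intro g
  induction g with
  | H w =>
    show Commute _ _
    induction w with
    | C1 => simp
    | of i =>
      show Commute (PresentedGroup.of i) _
      fin_cases i
      · exact commute_xz q
      · exact commute_yz q
      · exact Commute.refl _
    | inv_of i h => exact Commute.inv_left_iff.mpr h
    | mul u v hu hv =>
      have : PresentedGroup.mk (nilRels q) (u * v) =
        PresentedGroup.mk (nilRels q) u * PresentedGroup.mk (nilRels q) v := map_mul _ _ _
      rw [this]
      exact hu.mul_left hv

theorem zpowers_le_center :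
    Subgroup.zpowers (PresentedGroup.of (rels := nilRels q) 2) ≤
      Subgroup.center (PresentedGroup (nilRels q)) :=
  Subgroup.zpowers_le.mpr (z_mem_center q)

/-- Anything killed by both coordinate homs lies in `⟨z⟩`. -/
theorem mem_zpowers_of_ab (hq : 1 ≤ q) (g : PresentedGroup (nilRels q))
    (ha : (psi q g).a = 0) (hb : (psi q g).b = 0) :
    g ∈ Subgroup.zpowers (PresentedGroup.of (rels := nilRels q) 2) := by
  set zz := PresentedGroup.of (rels := nilRels q) 2 with hzz
  set N := Subgroup.zpowers zz with hN
  haveI hNn : N.Normal := by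
    constructor
    intro n hn g'
    have hcen := Subgroup.mem_center_iff.mp (zpowers_le_center q hn) g'
    rw [hcen, mul_assoc, mul_inv_cancel, mul_one]
    exact hn
  -- coordinate homs, killing N
  set φ1 : PresentedGroup (nilRels q) →* Multiplicative ℤ := (Heis_s13.pa).comp (psi q) with hφ1
  set φ2 : PresentedGroup (nilRels q) →* Multiplicative ℤ := (Heis_s13.pb).comp (psi q) with hφ2
  have hφ1x : φ1 (PresentedGroup.of 0) = Multiplicative.ofAdd 1 := by
    simp [hφ1, Heis_s13.pa, psi_of, Heis_s13.gen]
  have hφ1y : φ1 (PresentedGroup.of 1) = 1 := by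
    simp [hφ1, Heis_s13.pa, psi_of, Heis_s13.gen]
  have hφ2x : φ2 (PresentedGroup.of 0) = 1 := by
    simp [hφ2, Heis_s13.pb, psi_of, Heis_s13.gen]
  have hφ2y : φ2 (PresentedGroup.of 1) = Multiplicative.ofAdd 1 := by
    simp [hφ2, Heis_s13.pb, psi_of, Heis_s13.gen]
  have hφ1z : φ1 zz = 1 := by simp [hφ1, Heis_s13.pa, hzz, psi_of, Heis_s13.gen]
  have hφ2z : φ2 zz = 1 := by simp [hφ2, Heis_s13.pb, hzz, psi_of, Heis_s13.gen]
  have hφ1N : ∀ x ∈ N, φ1 x = 1 := by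
    rintro x ⟨k, rfl⟩; rw [map_zpow, hφ1z, one_zpow]
  have hφ2N : ∀ x ∈ N, φ2 x = 1 := by
    rintro x ⟨k, rfl⟩; rw [map_zpow, hφ2z, one_zpow]
  set mkQ : PresentedGroup (nilRels q) →* PresentedGroup (nilRels q) ⧸ N :=
    QuotientGroup.mk' N with hmkQ
  -- x and y commute in the quotient
  have hzqN : zz ^ q ∈ N := Subgroup.npow_mem_zpowers _ _
  have hcomm : Commute (mkQ (PresentedGroup.of 0)) (mkQ (PresentedGroup.of 1)) := by
    rw [← commutatorElement_eq_one_iff_commute]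
    have : mkQ (PresentedGroup.of 0 * PresentedGroup.of 1 * (PresentedGroup.of 0)⁻¹ *
        (PresentedGroup.of 1)⁻¹) = 1 := by
      rw [z_pow_q q]
      exact (QuotientGroup.eq_one_iff _).2 hzqN
    simpa [map_mul, map_inv, commutatorElement_def] using this
  -- representation: every class is x^a y^b
  set M : FreeGroup (Fin 3) →* PresentedGroup (nilRels q) ⧸ N :=
    mkQ.comp (PresentedGroup.mk (nilRels q)) with hM
  have hcomm' : Commute (M (FreeGroup.of 0)) (M (FreeGroup.of 1)) := hcomm
  have hrepF : ∀ w : FreeGroup (Fin 3), ∃ a b : ℤ,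
      M w = M (FreeGroup.of 0) ^ a * M (FreeGroup.of 1) ^ b := by
    intro w
    induction w with
    | C1 => exact ⟨0, 0, by simp⟩
    | of i =>
      have hpure : (pure i : FreeGroup (Fin 3)) = FreeGroup.of i := rfl
      fin_cases i
      · exact ⟨1, 0, by simp⟩
      · exact ⟨0, 1, by simp⟩
      · refine ⟨0, 0, ?_⟩
        have : M (FreeGroup.of 2) = 1 :=
          (QuotientGroup.eq_one_iff _).2 (Subgroup.mem_zpowers _)
        simpa using this
    | inv_of i h =>
      obtain ⟨a, b, hab⟩ := h
      refine ⟨-a, -b, ?_⟩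
      have hpure : (pure i : FreeGroup (Fin 3)) = FreeGroup.of i := rfl
      rw [map_inv, hab, mul_inv_rev, ← zpow_neg, ← zpow_neg]
      exact ((hcomm'.zpow_zpow (-a) (-b)).symm).eq
    | mul u v hu hv =>
      obtain ⟨a, b, hab⟩ := hu
      obtain ⟨a', b', hab'⟩ := hv
      refine ⟨a + a', b + b', ?_⟩
      rw [map_mul, hab, hab', zpow_add, zpow_add]
      have hc : M (FreeGroup.of 1) ^ b * M (FreeGroup.of 0) ^ a' =
          M (FreeGroup.of 0) ^ a' * M (FreeGroup.of 1) ^ b :=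
        ((hcomm'.zpow_zpow a' b).symm).eq
      calc M (FreeGroup.of 0) ^ a * M (FreeGroup.of 1) ^ b *
            (M (FreeGroup.of 0) ^ a' * M (FreeGroup.of 1) ^ b')
          = M (FreeGroup.of 0) ^ a *
            (M (FreeGroup.of 1) ^ b * M (FreeGroup.of 0) ^ a') *
            M (FreeGroup.of 1) ^ b' := by group
        _ = M (FreeGroup.of 0) ^ a *
            (M (FreeGroup.of 0) ^ a' * M (FreeGroup.of 1) ^ b) *
            M (FreeGroup.of 1) ^ b' := by rw [hc]
        _ = M (FreeGroup.of 0) ^ a * M (FreeGroup.of 0) ^ a' *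
            (M (FreeGroup.of 1) ^ b * M (FreeGroup.of 1) ^ b') := by group
  have hrep : ∀ u : PresentedGroup (nilRels q), ∃ a b : ℤ,
      mkQ u = mkQ (PresentedGroup.of 0) ^ a * mkQ (PresentedGroup.of 1) ^ b := by
    intro u
    induction u with
    | H w => exact hrepF w
  obtain ⟨a, b, hab⟩ := hrep g
  -- lift the coordinate homs to the quotient and evaluate
  set ψ1 : PresentedGroup (nilRels q) ⧸ N →* Multiplicative ℤ :=
    QuotientGroup.lift N φ1 hφ1N with hψ1
  set ψ2 : PresentedGroup (nilRels q) ⧸ N →* Multiplicative ℤ :=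
    QuotientGroup.lift N φ2 hφ2N with hψ2
  have hψ1g : ψ1 (mkQ g) = φ1 g := rfl
  have hψ2g : ψ2 (mkQ g) = φ2 g := rfl
  have hφ1g : φ1 g = 1 := by
    show Multiplicative.ofAdd (psi q g).a = 1
    rw [ha]; rfl
  have hφ2g : φ2 g = 1 := by
    show Multiplicative.ofAdd (psi q g).b = 1
    rw [hb]; rfl
  have ha0 : a = 0 := by
    have := hψ1g
    rw [hab, map_mul, map_zpow, map_zpow] at this
    have e1 : ψ1 (mkQ (PresentedGroup.of 0)) = Multiplicative.ofAdd 1 := hφ1x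
    have e2 : ψ1 (mkQ (PresentedGroup.of 1)) = 1 := hφ1y
    rw [e1, e2, one_zpow, mul_one, hφ1g] at this
    have : (Multiplicative.ofAdd (1 : ℤ)) ^ a = Multiplicative.ofAdd (0 : ℤ) := this
    rw [← ofAdd_zsmul] at this
    simpa using Multiplicative.ofAdd.injective this
  have hb0 : b = 0 := by
    have := hψ2g
    rw [hab, map_mul, map_zpow, map_zpow] at this
    have e1 : ψ2 (mkQ (PresentedGroup.of 0)) = 1 := hφ2x
    have e2 : ψ2 (mkQ (PresentedGroup.of 1)) = Multiplicative.ofAdd 1 := hφ2y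
    rw [e1, e2, one_zpow, one_mul, hφ2g] at this
    have : (Multiplicative.ofAdd (1 : ℤ)) ^ b = Multiplicative.ofAdd (0 : ℤ) := this
    rw [← ofAdd_zsmul] at this
    simpa using Multiplicative.ofAdd.injective this
  have : mkQ g = 1 := by rw [hab, ha0, hb0]; simp
  exact (QuotientGroup.eq_one_iff g).1 this

theorem center_le_zpowers (hq : 1 ≤ q) :
    Subgroup.center (PresentedGroup (nilRels q)) ≤
      Subgroup.zpowers (PresentedGroup.of (rels := nilRels q) 2) := by
  intro g hg
  have hx := Subgroup.mem_center_iff.mp hg (PresentedGroup.of 0)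
  have hy := Subgroup.mem_center_iff.mp hg (PresentedGroup.of 1)
  have hx' := congrArg (psi q) hx
  have hy' := congrArg (psi q) hy
  rw [map_mul, map_mul, psi_of] at hx' hy'
  -- extract coordinates
  have hb : (psi q g).b = 0 := by
    have h := congrArg Heis_s13.c hx'
    simp [Heis_s13.gen] at h
    have hqz : (q : ℤ) ≠ 0 := by exact_mod_cast Nat.one_le_iff_ne_zero.mp hq
    have h2 : (q : ℤ) * (psi q g).b = 0 := by linarith
    exact (mul_eq_zero.mp h2).resolve_left hqz
  have ha : (psi q g).a = 0 := by
    have := congrArg Heis_s13.c hy'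
    simp [Heis_s13.gen] at this
    exact this.resolve_left (by omega)
  exact mem_zpowers_of_ab q hq g ha hb

theorem z_mem_IGrp (hq : 1 ≤ q) :
    PresentedGroup.of (rels := nilRels q) 2 ∈ IGrp (PresentedGroup (nilRels q)) := by
  show Abelianization.of (PresentedGroup.of (rels := nilRels q) 2) ∈
    CommGroup.torsion (Abelianization (PresentedGroup (nilRels q)))
  rw [CommGroup.mem_torsion]
  rw [isOfFinOrder_iff_pow_eq_one]
  refine ⟨q, hq, ?_⟩
  rw [← map_pow, ← z_pow_q q]
  simp only [map_mul, map_inv]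
  exact commutatorElement_eq_one_iff_commute.mpr (Commute.all _ _)

theorem IGrp_le_zpowers (hq : 1 ≤ q) :
    IGrp (PresentedGroup (nilRels q)) ≤
      Subgroup.zpowers (PresentedGroup.of (rels := nilRels q) 2) := by
  intro g hg
  have hfin : IsOfFinOrder (Abelianization.of g) := hg
  obtain ⟨n, hn, hgn⟩ := isOfFinOrder_iff_pow_eq_one.mp hfin
  set φ1 : PresentedGroup (nilRels q) →* Multiplicative ℤ := (Heis_s13.pa).comp (psi q) with hφ1
  set φ2 : PresentedGroup (nilRels q) →* Multiplicative ℤ := (Heis_s13.pb).comp (psi q) with hφ2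
  have key : ∀ (φ : PresentedGroup (nilRels q) →* Multiplicative ℤ), (φ g) ^ n = 1 := by
    intro φ
    have hlift : (Abelianization.lift φ) (Abelianization.of g) = φ g := Abelianization.lift_apply_of _ _
    calc (φ g) ^ n = (Abelianization.lift φ) ((Abelianization.of g) ^ n) := by
          rw [map_pow, hlift]
      _ = 1 := by rw [hgn, map_one]
  have h1 := key φ1
  have h2 := key φ2
  have ha : (psi q g).a = 0 := by
    have : (Multiplicative.ofAdd (psi q g).a) ^ n = Multiplicative.ofAdd (0 : ℤ) := h1
    rw [← ofAdd_nsmul] at this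
    have := Multiplicative.ofAdd.injective this
    simp at this
    omega
  have hb : (psi q g).b = 0 := by
    have : (Multiplicative.ofAdd (psi q g).b) ^ n = Multiplicative.ofAdd (0 : ℤ) := h2
    rw [← ofAdd_nsmul] at this
    have := Multiplicative.ofAdd.injective this
    simp at this
    omega
  exact mem_zpowers_of_ab q hq g ha hb

end Main

/-- For `q ≥ 1` and `Γ_q = ⟨x, y, z ∣ [x,y] = z^q, xz = zx, yz = zy⟩`, the subgroup
`I(Γ_q)` (the preimage of the torsion subgroup of the abelianization) equals the centre
of `Γ_q`, which is the cyclic subgroup generated by the image of `z`. -/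
theorem stmt13 (q : ℕ) (hq : 1 ≤ q) :
    IGrp (PresentedGroup (nilRels q)) = Subgroup.center (PresentedGroup (nilRels q)) ∧
    Subgroup.center (PresentedGroup (nilRels q)) =
      Subgroup.zpowers (PresentedGroup.of (rels := nilRels q) 2) := by
  have h1 := zpowers_le_center q
  have h2 := center_le_zpowers q hq
  have h3 : Subgroup.zpowers (PresentedGroup.of (rels := nilRels q) 2) ≤
      IGrp (PresentedGroup (nilRels q)) :=
    Subgroup.zpowers_le.mpr (z_mem_IGrp q hq)
  have h4 := IGrp_le_zpowers q hq
  exact ⟨le_antisymm (h4.trans h1) (h2.trans h3), le_antisymm h2 h1⟩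
end

section
/- Let q ≥ 1, let Γ_q be the group with presentation ⟨x, y, z ∣ [x,y] = z^q, xz = zx, yz = zy⟩, and let p be an odd prime dividing q. Then the commutator subgroup Γ_q′ is contained in X^p(Γ_q), the subgroup generated by all p-th powers of elements of Γ_q. -/
/-- `X^r(G)`: the verbal subgroup generated by all `r`-th powers of elements of `G`. -/
def verbalPower (G : Type*) [Group G] (r : ℕ) : Subgroup G :=
  Subgroup.closure (Set.range fun g : G => g ^ r)

theorem verbalPower_normal (G : Type*) [Group G] (r : ℕ) : (verbalPower G r).Normal := by
  refine ⟨fun n hn g => ?_⟩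
  induction hn using Subgroup.closure_induction with
  | mem x hx =>
      obtain ⟨a, rfl⟩ := hx
      exact Subgroup.subset_closure ⟨g * a * g⁻¹, by simp only []; rw [conj_pow]⟩
  | one => simpa using (verbalPower G r).one_mem
  | mul x y _ _ hx hy =>
      have h : g * (x * y) * g⁻¹ = (g * x * g⁻¹) * (g * y * g⁻¹) := by group
      rw [h]; exact mul_mem hx hy
  | inv x _ hx =>
      have h : g * x⁻¹ * g⁻¹ = (g * x * g⁻¹)⁻¹ := by group
      rw [h]; exact inv_mem hx

/-- Let `q ≥ 1`, let `Γ_q = ⟨x, y, z ∣ [x,y] = z^q, xz = zx, yz = zy⟩`, and let `p` be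
an odd prime dividing `q`.  Then the commutator subgroup `Γ_q′` is contained in
`X^p(Γ_q)`, the subgroup generated by all `p`-th powers of elements of `Γ_q`. -/
theorem stmt14 (q : ℕ) (hq : 1 ≤ q) (p : ℕ) (hp : Nat.Prime p) (hodd : Odd p)
    (hpq : p ∣ q) :
    commutator (PresentedGroup (nilRels q)) ≤
      verbalPower (PresentedGroup (nilRels q)) p := by
  set Γ := PresentedGroup (nilRels q) with hΓ
  haveI hN : (verbalPower Γ p).Normal := verbalPower_normal Γ p
  set N := verbalPower Γ p with hNdef
  -- relator equalities in Γ
  have hrel : ∀ r ∈ nilRels q, PresentedGroup.mk (nilRels q) r = 1 := fun r hr =>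
    (QuotientGroup.eq_one_iff r).mpr (Subgroup.subset_normalClosure hr)
  have h1 := hrel _ (Set.mem_insert _ _)
  have h2 := hrel _ (Set.mem_insert_of_mem _ (Set.mem_insert _ _))
  have h3 := hrel _ (Set.mem_insert_of_mem _ (Set.mem_insert_of_mem _ rfl))
  simp only [map_mul, map_inv, map_pow] at h1 h2 h3
  set X : Γ := PresentedGroup.of 0 with hX
  set Y : Γ := PresentedGroup.of 1 with hY
  set Z : Γ := PresentedGroup.of 2 with hZ
  have h1' : X * Y * X⁻¹ * Y⁻¹ = Z ^ q := mul_inv_eq_one.mp h1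
  let π : Γ →* Γ ⧸ N := QuotientGroup.mk' N
  have hπ : Function.Surjective π := QuotientGroup.mk'_surjective N
  have hZq : π (Z ^ q) = 1 := by
    obtain ⟨m, rfl⟩ := hpq
    have h : Z ^ (p * m) = (Z ^ m) ^ p := pow_mul' Z p m
    rw [h]
    exact (QuotientGroup.eq_one_iff _).mpr (Subgroup.subset_closure ⟨Z ^ m, rfl⟩)
  have cXY : Commute (π X) (π Y) := by
    apply commutatorElement_eq_one_iff_commute.mp
    rw [commutatorElement_def, ← map_inv, ← map_inv, ← map_mul, ← map_mul, ← map_mul, h1', hZq]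
  have cXZ : Commute (π X) (π Z) := by
    refine (commutatorElement_eq_one_iff_commute.mp ?_).map π
    rw [commutatorElement_def]; exact h2
  have cYZ : Commute (π Y) (π Z) := by
    refine (commutatorElement_eq_one_iff_commute.mp ?_).map π
    rw [commutatorElement_def]; exact h3
  have base : ∀ i j : Fin 3, Commute (π (PresentedGroup.of i)) (π (PresentedGroup.of j)) := by
    intro i j
    fin_cases i <;> fin_cases j
    · exact Commute.refl _
    · exact cXY
    · exact cXZ
    · exact cXY.symm
    · exact Commute.refl _
    · exact cYZ
    · exact cXZ.symm
    · exact cYZ.symm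
    · exact Commute.refl _
  have hgen : Subgroup.closure
      (Set.range (fun i : Fin 3 => π (PresentedGroup.of i))) = (⊤ : Subgroup (Γ ⧸ N)) := by
    have h : (fun i : Fin 3 => π (PresentedGroup.of i)) = π ∘ PresentedGroup.of := rfl
    rw [h, Set.range_comp, ← MonoidHom.map_closure, PresentedGroup.closure_range_of,
      ← MonoidHom.range_eq_map]
    exact MonoidHom.range_eq_top.mpr hπ
  have Hab : ∀ a b : Γ ⧸ N, Commute a b := by
    intro a b
    have ha : a ∈ Subgroup.closure (Set.range (fun i : Fin 3 => π (PresentedGroup.of i))) := by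
      rw [hgen]; trivial
    have hb : b ∈ Subgroup.closure (Set.range (fun i : Fin 3 => π (PresentedGroup.of i))) := by
      rw [hgen]; trivial
    induction ha, hb using Subgroup.closure_induction₂ with
    | mem x y hx hy =>
        obtain ⟨i, rfl⟩ := hx; obtain ⟨j, rfl⟩ := hy; exact base i j
    | one_left y _ => exact Commute.one_left y
    | one_right x _ => exact Commute.one_right x
    | mul_left _ _ _ _ _ _ h₁ h₂ => exact h₁.mul_left h₂
    | mul_right _ _ _ _ _ _ h₁ h₂ => exact h₁.mul_right h₂
    | inv_left x _ _ _ h => exact h.inv_left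
    | inv_right y _ _ _ h => exact h.inv_right
  rw [commutator_def, Subgroup.commutator_le]
  intro g₁ _ g₂ _
  have h : π (g₁ * g₂ * g₁⁻¹ * g₂⁻¹) = 1 := by
    simp only [map_mul, map_inv]
    rw [(Hab (π g₁) (π g₂)).eq]; group
  exact (QuotientGroup.eq_one_iff _).mp h
end

section
/- Let G be the group with presentation ⟨a, b, c, t ∣ a b a⁻¹ = c, t a t⁻¹ = c⁻¹, t b t⁻¹ = c a⁻¹ c⁻¹, a b = 1, t a⁻¹ t a = 1⟩. Then G is isomorphic to ℤ × ℤ/2ℤ. -/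
/-- The relators of the presentation
`⟨a, b, c, t ∣ a b a⁻¹ = c, t a t⁻¹ = c⁻¹, t b t⁻¹ = c a⁻¹ c⁻¹, a b = 1, t a⁻¹ t a = 1⟩`
on the generators `a = 0`, `b = 1`, `c = 2`, `t = 3` of the free group on four letters. -/
def surgRels : Set (FreeGroup (Fin 4)) :=
  letI a : FreeGroup (Fin 4) := FreeGroup.of 0
  letI b : FreeGroup (Fin 4) := FreeGroup.of 1
  letI c : FreeGroup (Fin 4) := FreeGroup.of 2
  letI t : FreeGroup (Fin 4) := FreeGroup.of 3
  { a * b * a⁻¹ * c⁻¹,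
    t * a * t⁻¹ * c,
    t * b * t⁻¹ * (c * a⁻¹ * c⁻¹)⁻¹,
    a * b,
    t * a⁻¹ * t * a }

namespace Stmt16Aux

abbrev P : Type := PresentedGroup surgRels

def A : P := PresentedGroup.of 0
def B : P := PresentedGroup.of 1
def C : P := PresentedGroup.of 2
def T : P := PresentedGroup.of 3

lemma rel_one {r : FreeGroup (Fin 4)} (h : r ∈ surgRels) :
    PresentedGroup.mk surgRels r = 1 :=
  (QuotientGroup.eq_one_iff r).2 (Subgroup.subset_normalClosure h)

lemma rel1 : A * B * A⁻¹ * C⁻¹ = 1 := by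
  simpa [A, B, C, PresentedGroup.of] using rel_one (show (FreeGroup.of 0 * FreeGroup.of 1 * (FreeGroup.of 0)⁻¹
    * (FreeGroup.of 2)⁻¹ : FreeGroup (Fin 4)) ∈ surgRels by simp [surgRels])

lemma rel2 : T * A * T⁻¹ * C = 1 := by
  simpa [A, C, T, PresentedGroup.of] using rel_one (show (FreeGroup.of 3 * FreeGroup.of 0 * (FreeGroup.of 3)⁻¹
    * FreeGroup.of 2 : FreeGroup (Fin 4)) ∈ surgRels by simp [surgRels])

lemma rel4 : A * B = 1 := by
  simpa [A, B, PresentedGroup.of] using rel_one (show (FreeGroup.of 0 * FreeGroup.of 1 : FreeGroup (Fin 4))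
    ∈ surgRels by simp [surgRels])

lemma rel5 : T * A⁻¹ * T * A = 1 := by
  simpa [A, T, PresentedGroup.of] using rel_one (show (FreeGroup.of 3 * (FreeGroup.of 0)⁻¹ * FreeGroup.of 3
    * FreeGroup.of 0 : FreeGroup (Fin 4)) ∈ surgRels by simp [surgRels])

lemma hB : B = A⁻¹ := (inv_eq_of_mul_eq_one_right rel4).symm

lemma hC : C = A⁻¹ := by
  have h := rel1
  rw [mul_inv_eq_one] at h
  rw [← h, hB]; group

lemma comm : Commute T A := by
  have h : T * A * T⁻¹ = C⁻¹ := eq_inv_of_mul_eq_one_left rel2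
  rw [hC, inv_inv] at h
  show T * A = A * T
  calc T * A = (T * A * T⁻¹) * T := by group
  _ = A * T := by rw [h]

lemma hT2 : T ^ 2 = 1 := by
  have h := rel5
  rw [(comm.inv_right.eq : T * A⁻¹ = A⁻¹ * T)] at h
  have : A * (A⁻¹ * T * T * A) * A⁻¹ = A * 1 * A⁻¹ := by rw [h]
  calc T ^ 2 = A * (A⁻¹ * T * T * A) * A⁻¹ := by rw [pow_two]; group
  _ = 1 := by rw [h]; group

def f : Fin 4 → Multiplicative (ℤ × ZMod 2) :=
  ![Multiplicative.ofAdd (1, 0), Multiplicative.ofAdd (-1, 0),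
    Multiplicative.ofAdd (-1, 0), Multiplicative.ofAdd (0, 1)]

lemma hrel : ∀ r ∈ surgRels, FreeGroup.lift f r = 1 := by
  intro r hr
  simp only [surgRels, Set.mem_insert_iff, Set.mem_singleton_iff] at hr
  rcases hr with rfl | rfl | rfl | rfl | rfl <;>
    simp only [map_mul, map_inv, FreeGroup.lift_apply_of, f] <;> decide

def phi : P →* Multiplicative (ℤ × ZMod 2) := PresentedGroup.toGroup hrel

lemma Tval_add (m n : ZMod 2) : T ^ ((m + n).val) = T ^ m.val * T ^ n.val := by
  rw [← pow_add, ZMod.val_add]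
  exact (pow_eq_pow_mod _ hT2).symm

def psi : Multiplicative (ℤ × ZMod 2) →* P where
  toFun x := A ^ (x.toAdd.1) * T ^ (x.toAdd.2.val)
  map_one' := by simp
  map_mul' x y := by
    have c : Commute (T ^ (x.toAdd.2.val)) (A ^ (y.toAdd.1)) :=
      (comm.pow_left _).zpow_right _
    show A ^ (x.toAdd.1 + y.toAdd.1) * T ^ ((x.toAdd.2 + y.toAdd.2).val) = _
    rw [zpow_add, Tval_add, c.symm.mul_mul_mul_comm]

lemma psi_comp_phi : psi.comp phi = MonoidHom.id P := by
  apply PresentedGroup.ext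
  intro i
  fin_cases i <;>
    simp only [MonoidHom.comp_apply, MonoidHom.id_apply, phi, PresentedGroup.toGroup.of, f,
      psi, MonoidHom.coe_mk, OneHom.coe_mk, toAdd_ofAdd, Matrix.cons_val_zero, Matrix.cons_val_one,
      Matrix.head_cons]
  · show A ^ (1 : ℤ) * T ^ ((0 : ZMod 2).val) = A
    norm_num
  · show A ^ (-1 : ℤ) * T ^ ((0 : ZMod 2).val) = B
    rw [hB]; norm_num
  · show A ^ (-1 : ℤ) * T ^ ((0 : ZMod 2).val) = C
    rw [hC]; norm_num
  · show A ^ (0 : ℤ) * T ^ ((1 : ZMod 2).val) = T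
    norm_num [show ((1 : ZMod 2)).val = 1 from rfl]

lemma phi_comp_psi : phi.comp psi = MonoidHom.id _ := by
  refine MonoidHom.ext fun x => ?_
  simp only [MonoidHom.comp_apply, MonoidHom.id_apply, psi, MonoidHom.coe_mk, OneHom.coe_mk,
    map_mul, map_zpow, map_pow]
  have hA : phi A = Multiplicative.ofAdd ((1 : ℤ), (0 : ZMod 2)) := PresentedGroup.toGroup.of hrel
  have hT : phi T = Multiplicative.ofAdd ((0 : ℤ), (1 : ZMod 2)) := PresentedGroup.toGroup.of hrel
  rw [hA, hT]
  apply Multiplicative.toAdd.injective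
  simp only [toAdd_mul, toAdd_zpow, toAdd_pow, toAdd_ofAdd, Prod.smul_mk, Prod.mk_add_mk,
    smul_zero, zsmul_eq_mul, mul_one, nsmul_eq_mul, add_zero, zero_add]
  ext
  · simp
  · simp [ZMod.natCast_val, ZMod.cast_id]

end Stmt16Aux

/-- The group
`G = ⟨a, b, c, t ∣ a b a⁻¹ = c, t a t⁻¹ = c⁻¹, t b t⁻¹ = c a⁻¹ c⁻¹, a b = 1, t a⁻¹ t a = 1⟩`
is isomorphic to `ℤ × ℤ/2ℤ`. -/
theorem stmt16 :
    Nonempty (PresentedGroup surgRels ≃* Multiplicative (ℤ × ZMod 2)) :=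
  ⟨MonoidHom.toMulEquiv Stmt16Aux.phi Stmt16Aux.psi Stmt16Aux.psi_comp_phi Stmt16Aux.phi_comp_psi⟩
end

section
/- Let G be the group with presentation ⟨a, b, c, d, q, t ∣ a q a⁻¹ = c q c⁻¹, q a q⁻¹ = b, q c q⁻¹ = d, t a t⁻¹ = c⁻¹, t b t⁻¹ = c d⁻¹ c⁻¹, a b⁻¹ = 1, a⁻¹ c = 1, q⁻¹ t⁻¹ q t = 1⟩. Then G is isomorphic to ℤ × K, where K = ⟨a, t ∣ t a t⁻¹ = a⁻¹⟩ is the Klein bottle group ℤ ⋊ ℤ (with ℤ acting on ℤ by negation). -/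
/-- The relators of the presentation
`⟨a, b, c, d, q, t ∣ a q a⁻¹ = c q c⁻¹, q a q⁻¹ = b, q c q⁻¹ = d, t a t⁻¹ = c⁻¹,
t b t⁻¹ = c d⁻¹ c⁻¹, a b⁻¹ = 1, a⁻¹ c = 1, q⁻¹ t⁻¹ q t = 1⟩`
on the generators `a = 0`, `b = 1`, `c = 2`, `d = 3`, `q = 4`, `t = 5`. -/
def kbRels : Set (FreeGroup (Fin 6)) :=
  letI a : FreeGroup (Fin 6) := FreeGroup.of 0
  letI b : FreeGroup (Fin 6) := FreeGroup.of 1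
  letI c : FreeGroup (Fin 6) := FreeGroup.of 2
  letI d : FreeGroup (Fin 6) := FreeGroup.of 3
  letI q : FreeGroup (Fin 6) := FreeGroup.of 4
  letI t : FreeGroup (Fin 6) := FreeGroup.of 5
  { a * q * a⁻¹ * (c * q * c⁻¹)⁻¹,
    q * a * q⁻¹ * b⁻¹,
    q * c * q⁻¹ * d⁻¹,
    t * a * t⁻¹ * c,
    t * b * t⁻¹ * (c * d⁻¹ * c⁻¹)⁻¹,
    a * b⁻¹,
    a⁻¹ * c,
    q⁻¹ * t⁻¹ * q * t }

/-- The action of `ℤ` on `ℤ` by negation, written multiplicatively:  the generator of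
the second factor acts on the normal factor by inversion. -/
def negAction : Multiplicative ℤ →* MulAut (Multiplicative ℤ) :=
  zpowersHom (MulAut (Multiplicative ℤ)) (MulEquiv.inv (Multiplicative ℤ))

/-- The Klein bottle group `ℤ ⋊ ℤ`, with the generator of the second factor acting on
`ℤ` by negation; equivalently `⟨a, t ∣ t a t⁻¹ = a⁻¹⟩`. -/
def KleinBottleGroup : Type := Multiplicative ℤ ⋊[negAction] Multiplicative ℤ

instance : Group KleinBottleGroup := by unfold KleinBottleGroup; infer_instance

namespace Kb

abbrev K : Type := Multiplicative ℤ ⋊[negAction] Multiplicative ℤ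
abbrev G : Type := PresentedGroup kbRels
abbrev z : Multiplicative ℤ := Multiplicative.ofAdd 1

lemma z_zpow (x : Multiplicative ℤ) : z ^ x.toAdd = x := by
  simp [z, ← ofAdd_zsmul]

def π : FreeGroup (Fin 6) →* G := QuotientGroup.mk' (Subgroup.normalClosure kbRels)

def ga : G := PresentedGroup.of 0
def gb : G := PresentedGroup.of 1
def gc : G := PresentedGroup.of 2
def gd : G := PresentedGroup.of 3
def gq : G := PresentedGroup.of 4
def gt : G := PresentedGroup.of 5

lemma pi_of (i : Fin 6) : π (FreeGroup.of i) = PresentedGroup.of i := rfl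

lemma rel_mk {r : FreeGroup (Fin 6)} (hr : r ∈ kbRels) : π r = 1 := by
  exact (QuotientGroup.eq_one_iff r).2 (Subgroup.subset_normalClosure hr)

end Kb

namespace Kb

section rels
local notation "fa" => FreeGroup.of (0 : Fin 6)
local notation "fb" => FreeGroup.of (1 : Fin 6)
local notation "fc" => FreeGroup.of (2 : Fin 6)
local notation "fd" => FreeGroup.of (3 : Fin 6)
local notation "fq" => FreeGroup.of (4 : Fin 6)
local notation "ft" => FreeGroup.of (5 : Fin 6)

lemma r2 : gq * ga * gq⁻¹ * gb⁻¹ = 1 := by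
  have h := rel_mk (r := fq * fa * fq⁻¹ * fb⁻¹) (by
    unfold kbRels
    exact Set.mem_insert_of_mem _ (Set.mem_insert _ _))
  simp only [map_mul, map_inv, pi_of] at h
  exact h

lemma r3 : gq * gc * gq⁻¹ * gd⁻¹ = 1 := by
  have h := rel_mk (r := fq * fc * fq⁻¹ * fd⁻¹) (by
    unfold kbRels
    exact Set.mem_insert_of_mem _ (Set.mem_insert_of_mem _ (Set.mem_insert _ _)))
  simp only [map_mul, map_inv, pi_of] at h
  exact h

lemma r4 : gt * ga * gt⁻¹ * gc = 1 := by
  have h := rel_mk (r := ft * fa * ft⁻¹ * fc) (by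
    unfold kbRels
    exact Set.mem_insert_of_mem _ (Set.mem_insert_of_mem _ (Set.mem_insert_of_mem _
      (Set.mem_insert _ _))))
  simp only [map_mul, map_inv, pi_of] at h
  exact h

lemma r6 : ga * gb⁻¹ = 1 := by
  have h := rel_mk (r := fa * fb⁻¹) (by
    unfold kbRels
    exact Set.mem_insert_of_mem _ (Set.mem_insert_of_mem _ (Set.mem_insert_of_mem _
      (Set.mem_insert_of_mem _ (Set.mem_insert_of_mem _ (Set.mem_insert _ _))))))
  simp only [map_mul, map_inv, pi_of] at h
  exact h

lemma r7 : ga⁻¹ * gc = 1 := by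
  have h := rel_mk (r := fa⁻¹ * fc) (by
    unfold kbRels
    exact Set.mem_insert_of_mem _ (Set.mem_insert_of_mem _ (Set.mem_insert_of_mem _
      (Set.mem_insert_of_mem _ (Set.mem_insert_of_mem _ (Set.mem_insert_of_mem _
        (Set.mem_insert _ _)))))))
  simp only [map_mul, map_inv, pi_of] at h
  exact h

lemma r8 : gq⁻¹ * gt⁻¹ * gq * gt = 1 := by
  have h := rel_mk (r := fq⁻¹ * ft⁻¹ * fq * ft) (by
    unfold kbRels
    exact Set.mem_insert_of_mem _ (Set.mem_insert_of_mem _ (Set.mem_insert_of_mem _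
      (Set.mem_insert_of_mem _ (Set.mem_insert_of_mem _ (Set.mem_insert_of_mem _
        (Set.mem_insert_of_mem _ rfl)))))))
  simp only [map_mul, map_inv, pi_of] at h
  exact h

end rels

lemma hab : ga = gb := by
  have := r6
  rwa [mul_inv_eq_one] at this

lemma hac : ga = gc := by
  have := r7
  rwa [inv_mul_eq_one] at this

lemma had : ga = gd := by
  have h2 := r2
  have h3 := r3
  rw [← hac] at h3
  rw [mul_inv_eq_one] at h2 h3
  rw [← hab] at h2
  rw [← h2, h3]

lemma hqa : Commute gq ga := by
  have h2 := r2
  rw [mul_inv_eq_one, ← hab] at h2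
  have : gq * ga = ga * gq := by
    calc gq * ga = (gq * ga * gq⁻¹) * gq := by group
    _ = ga * gq := by rw [h2]
  exact this

lemma hqt : Commute gq gt := by
  have h := r8
  have : gq * gt = gt * gq := by
    have h2 : gt⁻¹ * gq * gt = gq := by
      calc gt⁻¹ * gq * gt = gq * (gq⁻¹ * gt⁻¹ * gq * gt) := by group
      _ = gq := by rw [h]; group
    calc gq * gt = gt * (gt⁻¹ * gq * gt) := by group
    _ = gt * gq := by rw [h2]
  exact this

lemma hta : gt * ga * gt⁻¹ = ga⁻¹ := by
  have h := r4
  rw [← hac] at h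
  calc gt * ga * gt⁻¹ = (gt * ga * gt⁻¹ * ga) * ga⁻¹ := by group
  _ = ga⁻¹ := by rw [h]; group

end Kb

namespace Kb

abbrev I := MulEquiv.inv (Multiplicative ℤ)

lemma negAction_apply (n : Multiplicative ℤ) : negAction n = I ^ n.toAdd := rfl

lemma I_sq : I * I = 1 := by
  ext x
  simp

lemma I_zpow_two : I ^ (2:ℤ) = 1 := by
  rw [show (2:ℤ) = 1+1 by norm_num, zpow_add, zpow_one, I_sq]

def f₁ : Multiplicative ℤ →* G := zpowersHom G ga
def f₂ : Multiplicative ℤ →* G := zpowersHom G gt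

lemma hta' : gt * ga = ga⁻¹ * gt := by
  calc gt * ga = (gt * ga * gt⁻¹) * gt := by group
  _ = ga⁻¹ * gt := by rw [hta]

lemma hta'' : gt * ga⁻¹ = ga * gt := by
  calc gt * ga⁻¹ = (gt * ga * gt⁻¹)⁻¹ * gt := by group
  _ = ga * gt := by rw [hta]; group

lemma h2comm : Commute (gt * gt) ga := by
  show gt * gt * ga = ga * (gt * gt)
  calc gt * gt * ga = gt * (gt * ga) := by group
  _ = gt * (ga⁻¹ * gt) := by rw [hta']
  _ = (gt * ga⁻¹) * gt := by group
  _ = ga * (gt * gt) := by rw [hta'']; group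

lemma gt_zpow_two : gt ^ (2:ℤ) = gt * gt := by
  rw [show (2:ℤ) = 1+1 by norm_num, zpow_add, zpow_one]

lemma even_comm (k : ℤ) : Commute (gt ^ (2*k)) ga := by
  rw [zpow_mul, gt_zpow_two]
  exact h2comm.zpow_left k

lemma lift_h : ∀ n : Multiplicative ℤ,
    f₁.comp ((negAction n).toMonoidHom) = (MulAut.conj (f₂ n)).toMonoidHom.comp f₁ := by
  intro n
  apply MonoidHom.ext_mint
  show f₁ ((negAction n) (Multiplicative.ofAdd 1)) =
    MulAut.conj (f₂ n) (f₁ (Multiplicative.ofAdd 1))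
  have hf1z : f₁ (Multiplicative.ofAdd 1) = ga := by
    simp [f₁, zpowersHom_apply]
  have hf2 : f₂ n = gt ^ n.toAdd := rfl
  rw [hf1z, hf2]
  rcases Int.even_or_odd n.toAdd with ⟨k, hk⟩ | ⟨k, hk⟩
  · have hne : negAction n = 1 := by
      rw [negAction_apply, hk, ← two_mul, zpow_mul, I_zpow_two, one_zpow]
    rw [hne]
    have c := even_comm k
    rw [hk, ← two_mul]
    show f₁ (Multiplicative.ofAdd 1) = gt ^ (2*k) * ga * (gt ^ (2*k))⁻¹
    rw [hf1z, c.eq, mul_inv_cancel_right]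
  · have hne : negAction n = I := by
      rw [negAction_apply, hk, zpow_add, zpow_mul, I_zpow_two, one_zpow, one_mul, zpow_one]
    rw [hne, hk]
    have hsplit : gt ^ (2*k+1) = gt ^ (2*k) * gt := by
      rw [zpow_add, zpow_one]
    rw [hsplit]
    have c := (even_comm k).inv_right
    show f₁ ((Multiplicative.ofAdd 1)⁻¹) = gt ^ (2*k) * gt * ga * (gt ^ (2*k) * gt)⁻¹
    rw [map_inv, hf1z]
    calc ga⁻¹ = gt ^ (2*k) * ga⁻¹ * (gt ^ (2*k))⁻¹ := by rw [c.eq, mul_inv_cancel_right]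
    _ = gt ^ (2*k) * (gt * ga * gt⁻¹) * (gt ^ (2*k))⁻¹ := by rw [hta]
    _ = gt ^ (2*k) * gt * ga * (gt ^ (2*k) * gt)⁻¹ := by group

def ψK : K →* G := SemidirectProduct.lift f₁ f₂ lift_h

lemma commQ (k : K) : Commute gq (ψK k) := by
  rw [← SemidirectProduct.inl_left_mul_inr_right k, map_mul]
  have h1 : ψK (SemidirectProduct.inl k.left) = ga ^ k.left.toAdd := by
    simp [ψK, f₁, zpowersHom_apply]
  have h2 : ψK (SemidirectProduct.inr k.right) = gt ^ k.right.toAdd := by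
    simp [ψK, f₂, zpowersHom_apply]
  rw [h1, h2]
  exact (hqa.zpow_right _).mul_right (hqt.zpow_right _)

def ψ : Multiplicative ℤ × K →* G :=
  MonoidHom.mk' (fun p => gq ^ p.1.toAdd * ψK p.2) (by
    intro p p'
    simp only [Prod.fst_mul, Prod.snd_mul, toAdd_mul, map_mul, zpow_add]
    rw [mul_assoc (gq ^ p.1.toAdd), ← mul_assoc (gq ^ p'.1.toAdd),
      ((commQ p.2).zpow_left p'.1.toAdd).eq]
    group)

lemma ψ_apply (p : Multiplicative ℤ × K) : ψ p = gq ^ p.1.toAdd * ψK p.2 := rfl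

end Kb

namespace Kb

def fV : Fin 6 → Multiplicative ℤ × K
  | 0 => (1, SemidirectProduct.inl z)
  | 1 => (1, SemidirectProduct.inl z)
  | 2 => (1, SemidirectProduct.inl z)
  | 3 => (1, SemidirectProduct.inl z)
  | 4 => (z, 1)
  | 5 => (1, SemidirectProduct.inr z)

lemma negAction_z_z : negAction z z = z⁻¹ := by
  simp [negAction_apply]

lemma TAT : (SemidirectProduct.inr z : K) * SemidirectProduct.inl z *
    (SemidirectProduct.inr z)⁻¹ = (SemidirectProduct.inl z)⁻¹ := by
  have h := (SemidirectProduct.inl_aut (φ := negAction) z z).symm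
  rw [negAction_z_z, map_inv] at h
  rw [← map_inv] at h ⊢
  exact h.symm ▸ h

lemma hrels : ∀ r ∈ kbRels, FreeGroup.lift fV r = 1 := by
  intro r hr
  unfold kbRels at hr
  simp only [Set.mem_insert_iff, Set.mem_singleton_iff] at hr
  rcases hr with rfl|rfl|rfl|rfl|rfl|rfl|rfl|rfl <;>
    simp [fV, Prod.ext_iff, Prod.mul_def, TAT]

def φ : G →* Multiplicative ℤ × K := PresentedGroup.toGroup hrels

end Kb

namespace Kb

lemma pK_inl (m : Multiplicative ℤ) : ψK (SemidirectProduct.inl m) = ga ^ m.toAdd := by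
  simp [ψK, f₁, zpowersHom_apply]

lemma pK_inr (m : Multiplicative ℤ) : ψK (SemidirectProduct.inr m) = gt ^ m.toAdd := by
  simp [ψK, f₂, zpowersHom_apply]

lemma e0 : ψ (1, (SemidirectProduct.inl z : K)) = ga := by
  rw [ψ_apply, pK_inl]
  simp [z]

lemma e4 : ψ ((z : Multiplicative ℤ), (1 : K)) = gq := by
  rw [ψ_apply]
  simp [z]

lemma e5 : ψ (1, (SemidirectProduct.inr z : K)) = gt := by
  rw [ψ_apply, pK_inr]
  simp [z]

lemma comp1 : ψ.comp φ = MonoidHom.id G := by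
  apply PresentedGroup.ext
  intro x
  fin_cases x <;>
    rw [MonoidHom.comp_apply, MonoidHom.id_apply, φ, PresentedGroup.toGroup.of]
  · exact e0
  · exact e0.trans hab
  · exact e0.trans hac
  · exact e0.trans had
  · exact e4
  · exact e5

lemma pga : φ ga = (1, (SemidirectProduct.inl z : K)) := PresentedGroup.toGroup.of hrels
lemma pgt : φ gt = (1, (SemidirectProduct.inr z : K)) := PresentedGroup.toGroup.of hrels
lemma pgq : φ gq = ((z : Multiplicative ℤ), (1 : K)) := PresentedGroup.toGroup.of hrels

lemma comp2 : φ.comp ψ = MonoidHom.id (Multiplicative ℤ × K) := by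
  apply MonoidHom.ext
  rintro ⟨x, k⟩
  rw [MonoidHom.comp_apply, MonoidHom.id_apply, ψ_apply]
  have hK : φ (ψK k) = (1, k) := by
    rw [← SemidirectProduct.inl_left_mul_inr_right k, map_mul, map_mul, pK_inl, pK_inr,
      map_zpow, map_zpow, pga, pgt]
    refine Prod.ext ?_ ?_
    · show (1:Multiplicative ℤ) ^ k.left.toAdd * (1:Multiplicative ℤ) ^ k.right.toAdd = 1
      simp
    · show (SemidirectProduct.inl z : K) ^ k.left.toAdd *
        (SemidirectProduct.inr z : K) ^ k.right.toAdd =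
        SemidirectProduct.inl k.left * SemidirectProduct.inr k.right
      rw [← map_zpow (SemidirectProduct.inl (φ := negAction)),
        ← map_zpow (SemidirectProduct.inr (φ := negAction)), z_zpow, z_zpow]
  rw [map_mul, map_zpow, pgq, hK]
  refine Prod.ext ?_ ?_
  · show z ^ Multiplicative.toAdd x * 1 = x
    rw [mul_one, z_zpow]
  · show (1:K) ^ Multiplicative.toAdd x * k = k
    simp

end Kb


/-- The group
`G = ⟨a, b, c, d, q, t ∣ a q a⁻¹ = c q c⁻¹, q a q⁻¹ = b, q c q⁻¹ = d, t a t⁻¹ = c⁻¹,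
t b t⁻¹ = c d⁻¹ c⁻¹, a b⁻¹ = 1, a⁻¹ c = 1, q⁻¹ t⁻¹ q t = 1⟩`
is isomorphic to `ℤ × K`, where `K` is the Klein bottle group `ℤ ⋊ ℤ`. -/
theorem stmt17 :
    Nonempty (PresentedGroup kbRels ≃* Multiplicative ℤ × KleinBottleGroup) := by
  exact ⟨MonoidHom.toMulEquiv Kb.φ Kb.ψ Kb.comp1 Kb.comp2⟩
end
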